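/- arXiv:1701.03119 — 5 statements merged into one kernel-verified Lean document; each statement's English description precedes it below -/
import Mathlib

section
/- The function H_m^n(α) is monotonically non-decreasing in m: for every 1 ≤ m < 2^n, H_m^n(α) ≤ H_{m+1}^n(α). -/
/-- Shannon entropy (in bits) of a distribution `p` on a finite type. -/
noncomputable def ent {Ω : Type*} [Fintype Ω] (p : Ω → ℝ) : ℝ :=
  ∑ x, -(p x * Real.logb 2 (p x))

/-- The distribution of `U_S ⊕ Z^n`, where `U_S` is uniform on `S` and `Z^n` is
i.i.d. Bernoulli(α), independent of `U_S`. -/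
noncomputable def bscOut {n : ℕ} (S : Finset (Fin n → Bool)) (α : ℝ)
    (y : Fin n → Bool) : ℝ :=
  (S.card : ℝ)⁻¹ * ∑ x ∈ S, ∏ i, (if y i = x i then 1 - α else α)

/-- `H_m^n(α)`: minimal entropy of `U_S ⊕ Z^n` over sets `S` of cardinality `m`. -/
noncomputable def Hmn (n m : ℕ) (α : ℝ) : ℝ :=
  sInf {h : ℝ | ∃ S : Finset (Fin n → Bool), S.card = m ∧ h = ent (bscOut S α)}

lemma ent_eq {Ω : Type*} [Fintype Ω] (p : Ω → ℝ) :
    ent p = (∑ x, Real.negMulLog (p x)) / Real.log 2 := by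
  unfold ent
  rw [Finset.sum_div]
  refine Finset.sum_congr rfl fun x _ => ?_
  simp only [Real.negMulLog, Real.logb]
  ring

lemma prod_nonneg' {n : ℕ} {α : ℝ} (hα0 : 0 ≤ α) (hα1 : α ≤ 1) (x y : Fin n → Bool) :
    0 ≤ ∏ i, (if y i = x i then 1 - α else α) := by
  refine Finset.prod_nonneg fun i _ => ?_
  split <;> linarith

lemma prod_le_one' {n : ℕ} {α : ℝ} (hα0 : 0 ≤ α) (hα1 : α ≤ 1) (x y : Fin n → Bool) :
    ∏ i, (if y i = x i then 1 - α else α) ≤ 1 := by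
  refine Finset.prod_le_one (fun i _ => ?_) (fun i _ => ?_) <;> split <;> linarith

lemma bscOut_nonneg {n : ℕ} (S : Finset (Fin n → Bool)) {α : ℝ}
    (hα0 : 0 ≤ α) (hα1 : α ≤ 1) (y : Fin n → Bool) : 0 ≤ bscOut S α y := by
  unfold bscOut
  exact mul_nonneg (by positivity) (Finset.sum_nonneg fun x _ => prod_nonneg' hα0 hα1 x y)

lemma bscOut_le_one {n : ℕ} (S : Finset (Fin n → Bool)) {α : ℝ}
    (hα0 : 0 ≤ α) (hα1 : α ≤ 1) (y : Fin n → Bool) : bscOut S α y ≤ 1 := by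
  unfold bscOut
  rcases eq_or_ne S.card 0 with h | h
  · simp [h]
  · have hpos : (0:ℝ) < S.card := by positivity
    rw [inv_mul_le_iff₀ hpos, mul_one]
    calc ∑ x ∈ S, ∏ i, (if y i = x i then 1 - α else α)
        ≤ ∑ _x ∈ S, (1:ℝ) := Finset.sum_le_sum fun x _ => prod_le_one' hα0 hα1 x y
      _ = S.card := by simp

lemma ent_nonneg {Ω : Type*} [Fintype Ω] {p : Ω → ℝ}
    (h0 : ∀ x, 0 ≤ p x) (h1 : ∀ x, p x ≤ 1) : 0 ≤ ent p := by
  rw [ent_eq]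
  refine div_nonneg (Finset.sum_nonneg fun x _ => ?_) (Real.log_nonneg one_le_two)
  exact Real.negMulLog_nonneg (h0 x) (h1 x)

lemma bscOut_mix {n : ℕ} (S : Finset (Fin n → Bool)) (α : ℝ) (h2 : 2 ≤ S.card)
    (y : Fin n → Bool) :
    bscOut S α y = ∑ x ∈ S, (S.card : ℝ)⁻¹ * bscOut (S.erase x) α y := by
  set P : (Fin n → Bool) → ℝ := fun x => ∏ i, (if y i = x i then 1 - α else α) with hP
  have hc2 : (2:ℝ) ≤ (S.card : ℝ) := by exact_mod_cast h2
  have hc : (S.card : ℝ) ≠ 0 := by linarith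
  have hc1 : (S.card : ℝ) - 1 ≠ 0 := by linarith
  have hcard : ∀ x ∈ S, ((S.erase x).card : ℝ) = (S.card : ℝ) - 1 := by
    intro x hx
    rw [Finset.card_erase_of_mem hx]
    have : 1 ≤ S.card := by omega
    push_cast [this]
    ring
  have key : ∑ x ∈ S, (S.card : ℝ)⁻¹ * bscOut (S.erase x) α y
      = (S.card : ℝ)⁻¹ * (((S.card : ℝ) - 1)⁻¹ *
        ∑ x ∈ S, ((∑ x' ∈ S, P x') - P x)) := by
    rw [Finset.mul_sum, Finset.mul_sum]
    refine Finset.sum_congr rfl fun x hx => ?_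
    unfold bscOut
    rw [hcard x hx, Finset.sum_erase_eq_sub hx]
  rw [key]
  have hsum : ∑ x ∈ S, ((∑ x' ∈ S, P x') - P x)
      = ((S.card : ℝ) - 1) * ∑ x' ∈ S, P x' := by
    rw [Finset.sum_sub_distrib, Finset.sum_const, nsmul_eq_mul]
    ring
  rw [hsum]
  unfold bscOut
  field_simp
  rfl

lemma exists_erase_ent_le {n : ℕ} (S : Finset (Fin n → Bool)) {α : ℝ}
    (hα0 : 0 ≤ α) (hα1 : α ≤ 1) (h2 : 2 ≤ S.card) :
    ∃ x ∈ S, ent (bscOut (S.erase x) α) ≤ ent (bscOut S α) := by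
  have hS : S.Nonempty := Finset.card_pos.mp (by omega)
  have hcpos : (0:ℝ) < (S.card : ℝ) := by
    have : (2:ℝ) ≤ (S.card : ℝ) := by exact_mod_cast h2
    linarith
  by_contra h
  push_neg at h
  -- Jensen pointwise
  have jensen : ∀ y, ∑ x ∈ S, (S.card : ℝ)⁻¹ * Real.negMulLog (bscOut (S.erase x) α y)
      ≤ Real.negMulLog (bscOut S α y) := by
    intro y
    have := Real.concaveOn_negMulLog.le_map_sum (t := S)
      (w := fun _ => (S.card : ℝ)⁻¹) (p := fun x => bscOut (S.erase x) α y)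
      (fun i _ => by positivity)
      (by rw [Finset.sum_const, nsmul_eq_mul]; field_simp)
      (fun i _ => bscOut_nonneg _ hα0 hα1 y)
    simp only [smul_eq_mul] at this
    rwa [← bscOut_mix S α h2 y] at this
  have sum_jensen : ∑ x ∈ S, (S.card : ℝ)⁻¹ * ent (bscOut (S.erase x) α)
      ≤ ent (bscOut S α) := by
    rw [ent_eq]
    have : ∑ x ∈ S, (S.card : ℝ)⁻¹ * ent (bscOut (S.erase x) α)
        = (∑ y, ∑ x ∈ S, (S.card : ℝ)⁻¹ * Real.negMulLog (bscOut (S.erase x) α y))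
          / Real.log 2 := by
      rw [Finset.sum_comm, Finset.sum_div]
      refine Finset.sum_congr rfl fun x _ => ?_
      rw [ent_eq, ← mul_div_assoc, Finset.mul_sum]
    rw [this]
    exact (div_le_div_iff_of_pos_right (Real.log_pos one_lt_two)).mpr
      (Finset.sum_le_sum fun y _ => jensen y)
  have strict : ent (bscOut S α) < ∑ x ∈ S, (S.card : ℝ)⁻¹ * ent (bscOut (S.erase x) α) := by
    have heq : ent (bscOut S α) = ∑ _x ∈ S, (S.card : ℝ)⁻¹ * ent (bscOut S α) := by
      rw [Finset.sum_const, nsmul_eq_mul]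
      field_simp
    rw [heq]
    refine Finset.sum_lt_sum_of_nonempty hS fun x hx => ?_
    exact mul_lt_mul_of_pos_left (h x hx) (inv_pos.mpr hcpos)
  linarith

theorem Hmn_mono (n m : ℕ) (α : ℝ) (hα : α ∈ Set.Icc (0:ℝ) (1/2))
    (hm : 1 ≤ m) (hm' : m < 2 ^ n) :
    Hmn n m α ≤ Hmn n (m + 1) α := by
  obtain ⟨hα0, hα2⟩ := hα
  have hα1 : α ≤ 1 := by linarith
  have hbdd : ∀ k : ℕ, BddBelow {h : ℝ | ∃ S : Finset (Fin n → Bool),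
      S.card = k ∧ h = ent (bscOut S α)} := by
    intro k
    refine ⟨0, fun h hh => ?_⟩
    obtain ⟨S, _, rfl⟩ := hh
    exact ent_nonneg (bscOut_nonneg S hα0 hα1) (bscOut_le_one S hα0 hα1)
  have hne : {h : ℝ | ∃ S : Finset (Fin n → Bool),
      S.card = m + 1 ∧ h = ent (bscOut S α)}.Nonempty := by
    obtain ⟨S, _, hScard⟩ := Finset.exists_subset_card_eq
      (s := (Finset.univ : Finset (Fin n → Bool))) (n := m + 1)
      (by simp only [Finset.card_univ, Fintype.card_fun, Fintype.card_fin,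
            Fintype.card_bool]; omega)
    exact ⟨ent (bscOut S α), S, hScard, rfl⟩
  refine le_csInf hne ?_
  rintro h ⟨S, hScard, rfl⟩
  obtain ⟨x, hx, hle⟩ := exists_erase_ent_le S hα0 hα1 (by omega)
  refine le_trans (csInf_le (hbdd m) ?_) hle
  exact ⟨S.erase x, by rw [Finset.card_erase_of_mem hx, hScard]; omega, rfl⟩
end

section
/- Let S ⊆ {0,1}^n and let S̄ be the result of one shifting step on the first coordinate. Let P_{Y|X} be a discrete memoryless channel with binary input, and let Y^n (resp. Ȳ^n) be its output when the input is U_S (resp. U_{S̄}), uniform on S (resp. S̄). Then for every ω in the output alphabet power 𝒴^{n−1}: (i) Pr(Y_2^n = ω) = Pr(Ȳ_2^n = ω), and (ii) |Pr(U_{S̄,1} = 1 | Ȳ_2^n = ω) − 1/2| ≥ |Pr(U_{S,1} = 1 | Y_2^n = ω) − 1/2|. -/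
/-- `S_i`: members of `S` with `i`-th coordinate `1` whose flip-down is not in `S`. -/
def shiftSet {n : ℕ} (S : Finset (Fin n → Bool)) (i : Fin n) :
    Finset (Fin n → Bool) :=
  S.filter (fun x => x i = true ∧ Function.update x i false ∉ S)

/-- `Pr(Y_2^n = ω)` when the input to the memoryless channel `P` is uniform on `S`. -/
noncomputable def prY2 {n : ℕ} {Y : Type*} [Fintype Y] (P : Bool → Y → ℝ)
    (S : Finset (Fin (n+1) → Bool)) (ω : Fin n → Y) : ℝ :=
  (S.card : ℝ)⁻¹ * ∑ x ∈ S, ∏ j : Fin n, P (x j.succ) (ω j)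

/-- `Pr(U_{S,1} = 1, Y_2^n = ω)` when the input is uniform on `S`. -/
noncomputable def prJoint {n : ℕ} {Y : Type*} [Fintype Y] (P : Bool → Y → ℝ)
    (S : Finset (Fin (n+1) → Bool)) (ω : Fin n → Y) : ℝ :=
  (S.card : ℝ)⁻¹ * ∑ x ∈ S.filter (fun x => x 0 = true), ∏ j : Fin n, P (x j.succ) (ω j)

theorem shift_preserves_marginal_and_biases (n : ℕ) (Y : Type*) [Fintype Y]
    (P : Bool → Y → ℝ) (hP0 : ∀ b y, 0 ≤ P b y) (hP1 : ∀ b, ∑ y, P b y = 1)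
    (S : Finset (Fin (n+1) → Bool)) (hS : S.Nonempty)
    (SBar : Finset (Fin (n+1) → Bool))
    (hSBar : SBar = (S \ shiftSet S 0) ∪
      (shiftSet S 0).image (fun x => Function.update x 0 false))
    (ω : Fin n → Y) :
    prY2 P S ω = prY2 P SBar ω ∧
    |prJoint P S ω / prY2 P S ω - 1/2| ≤
      |prJoint P SBar ω / prY2 P SBar ω - 1/2| := by
  classical
  set f : (Fin (n+1) → Bool) → ℝ := fun x => ∏ j : Fin n, P (x j.succ) (ω j) with hf
  have hfnn : ∀ x, 0 ≤ f x := fun x => Finset.prod_nonneg (fun j _ => hP0 _ _)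
  have hfupd : ∀ x : Fin (n+1) → Bool, f (Function.update x 0 false) = f x := by
    intro x
    refine Finset.prod_congr rfl (fun j _ => ?_)
    rw [Function.update_of_ne (Fin.succ_ne_zero j)]
  set S1 := shiftSet S 0 with hS1
  have hS1mem : ∀ x, x ∈ S1 ↔
      x ∈ S ∧ x 0 = true ∧ Function.update x 0 false ∉ S := by
    intro x; simp [hS1, shiftSet, Finset.mem_filter, and_assoc]
  -- injectivity of flip-down on sets where coordinate 0 is true
  have hinj : ∀ x x' : Fin (n+1) → Bool, x 0 = true → x' 0 = true →
      Function.update x 0 false = Function.update x' 0 false → x = x' := by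
    intro x x' hx hx' h
    funext i
    by_cases hi : i = 0
    · subst hi; rw [hx, hx']
    · have := congrFun h i
      rwa [Function.update_of_ne hi, Function.update_of_ne hi] at this
  have hS1sub : S1 ⊆ S.filter (fun x => x 0 = true) := by
    intro x hx
    rw [hS1mem] at hx
    exact Finset.mem_filter.mpr ⟨hx.1, hx.2.1⟩
  have hdisj : Disjoint (S \ S1) (S1.image (fun x => Function.update x 0 false)) := by
    rw [Finset.disjoint_right]
    intro y hy hy'
    obtain ⟨x, hx, rfl⟩ := Finset.mem_image.mp hy
    rw [hS1mem] at hx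
    exact hx.2.2 (Finset.mem_sdiff.mp hy').1
  have hinjOn : Set.InjOn (fun x : Fin (n+1) → Bool => Function.update x 0 false) ↑S1 := by
    intro x hx x' hx' h
    rw [Finset.mem_coe, hS1mem] at hx hx'
    exact hinj _ _ hx.2.1 hx'.2.1 h
  -- sums
  have hsumSBar : ∑ x ∈ SBar, f x = ∑ x ∈ S, f x := by
    rw [hSBar, Finset.sum_union hdisj, Finset.sum_image hinjOn]
    have : ∑ x ∈ S1, f (Function.update x 0 false) = ∑ x ∈ S1, f x :=
      Finset.sum_congr rfl (fun x _ => hfupd x)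
    rw [this, Finset.sum_sdiff (fun x hx => ((hS1mem x).mp hx).1)]
  have hcard : SBar.card = S.card := by
    rw [hSBar, Finset.card_union_of_disjoint hdisj, Finset.card_image_of_injOn hinjOn,
      Finset.card_sdiff_of_subset (fun x hx => ((hS1mem x).mp hx).1)]
    have : S1.card ≤ S.card := Finset.card_le_card (fun x hx => ((hS1mem x).mp hx).1)
    omega
  -- filtered sum on SBar
  have hfilterSBar : SBar.filter (fun x => x 0 = true)
      = (S.filter (fun x => x 0 = true)) \ S1 := by
    rw [hSBar, Finset.filter_union]
    have himg : (S1.image (fun x => Function.update x 0 false)).filter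
        (fun x => x 0 = true) = ∅ := by
      rw [Finset.filter_eq_empty_iff]
      intro y hy
      obtain ⟨x, hx, rfl⟩ := Finset.mem_image.mp hy
      simp [Function.update_self]
    rw [himg, Finset.union_empty]
    ext x
    simp only [Finset.mem_filter, Finset.mem_sdiff]
    tauto
  set A := ∑ x ∈ S, f x with hA
  set B := ∑ x ∈ S.filter (fun x => x 0 = true), f x with hB
  set C := ∑ x ∈ S1, f x with hC
  have hsumBar : ∑ x ∈ SBar.filter (fun x => x 0 = true), f x = B - C := by
    rw [hfilterSBar]
    have := Finset.sum_sdiff (f := f) hS1sub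
    linarith [this]
  -- bounds
  have hCnn : 0 ≤ C := Finset.sum_nonneg (fun x _ => hfnn x)
  have hCB : C ≤ B := Finset.sum_le_sum_of_subset_of_nonneg hS1sub (fun x _ _ => hfnn x)
  have hBA : B ≤ A := Finset.sum_le_sum_of_subset_of_nonneg
    (Finset.filter_subset _ _) (fun x _ _ => hfnn x)
  have hAnn : 0 ≤ A := Finset.sum_nonneg (fun x _ => hfnn x)
  -- key : B - C ≤ A - B
  have hkey : B - C ≤ A - B := by
    set D := (S.filter (fun x => x 0 = true)) \ S1 with hD
    have hDsum : ∑ x ∈ D, f x = B - C := by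
      have := Finset.sum_sdiff (f := f) hS1sub
      linarith [this]
    have hDmem : ∀ x ∈ D, x ∈ S ∧ x 0 = true ∧ Function.update x 0 false ∈ S := by
      intro x hx
      rw [hD, Finset.mem_sdiff, Finset.mem_filter] at hx
      obtain ⟨⟨hxS, hx0⟩, hxn⟩ := hx
      refine ⟨hxS, hx0, ?_⟩
      by_contra hcon
      exact hxn ((hS1mem x).mpr ⟨hxS, hx0, hcon⟩)
    have hDinj : Set.InjOn (fun x : Fin (n+1) → Bool => Function.update x 0 false) ↑D := by
      intro x hx x' hx' h
      exact hinj _ _ (hDmem x hx).2.1 (hDmem x' hx').2.1 h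
    have himgsub : D.image (fun x => Function.update x 0 false)
        ⊆ S.filter (fun x => x 0 = false) := by
      intro y hy
      obtain ⟨x, hx, rfl⟩ := Finset.mem_image.mp hy
      refine Finset.mem_filter.mpr ⟨(hDmem x hx).2.2, by simp [Function.update_self]⟩
    have h1 : ∑ x ∈ D, f x ≤ ∑ x ∈ S.filter (fun x => x 0 = false), f x := by
      calc ∑ x ∈ D, f x = ∑ y ∈ D.image (fun x => Function.update x 0 false), f y := by
            rw [Finset.sum_image hDinj]
            exact (Finset.sum_congr rfl (fun x _ => (hfupd x).symm))
        _ ≤ _ := Finset.sum_le_sum_of_subset_of_nonneg himgsub (fun x _ _ => hfnn x)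
    have h2 : A = B + ∑ x ∈ S.filter (fun x => x 0 = false), f x := by
      rw [hA, hB]
      have : S.filter (fun x => x 0 = false) = S.filter (fun x => ¬ (x 0 = true)) := by
        apply Finset.filter_congr
        intro x _
        simp
      rw [this, Finset.sum_filter_add_sum_filter_not S (fun x => x 0 = true) f]
    linarith [h1, hDsum]
  -- now conclude
  have hcardpos : (0 : ℝ) < (S.card : ℝ) := by
    exact_mod_cast Finset.card_pos.mpr hS
  have hk : (S.card : ℝ)⁻¹ ≠ 0 := by positivity
  have hY2S : prY2 P S ω = (S.card : ℝ)⁻¹ * A := rfl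
  have hY2SBar : prY2 P SBar ω = (S.card : ℝ)⁻¹ * A := by
    rw [prY2, hcard, hsumSBar]
  have hJS : prJoint P S ω = (S.card : ℝ)⁻¹ * B := rfl
  have hJSBar : prJoint P SBar ω = (S.card : ℝ)⁻¹ * (B - C) := by
    rw [prJoint, hcard, hsumBar]
  refine ⟨by rw [hY2S, hY2SBar], ?_⟩
  rw [hY2S, hY2SBar, hJS, hJSBar]
  rcases eq_or_lt_of_le hAnn with hA0 | hApos
  · have hB0 : B = 0 := le_antisymm (by linarith) (by
      exact Finset.sum_nonneg (fun x _ => hfnn x))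
    have hC0 : C = 0 := le_antisymm (by linarith) hCnn
    rw [hB0, hC0, ← hA0]
    simp
  · rw [mul_div_mul_left _ _ hk, mul_div_mul_left _ _ hk]
    have hAne : A ≠ 0 := ne_of_gt hApos
    have e1 : B / A - 1/2 = (2*B - A) / (2*A) := by field_simp
    have e2 : (B - C) / A - 1/2 = (2*(B-C) - A) / (2*A) := by field_simp
    rw [e1, e2, abs_div, abs_div]
    have hnum : |2*B - A| ≤ |2*(B-C) - A| := by
      have hR : |2*(B-C) - A| = A + 2*C - 2*B := by
        rw [abs_of_nonpos (by linarith)]; ring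
      rw [hR, abs_le]
      constructor <;> linarith
    exact div_le_div_of_nonneg_right hnum (by positivity)
end

section
/- One shifting step does not increase the output entropy of a BSC: if S̄ is obtained from S ⊆ {0,1}^n by one shifting step, then H(U_{S̄} ⊕ Z^n) ≤ H(U_S ⊕ Z^n). -/
lemma pair_le_aux {a b a' b' : ℝ} (hb' : 0 ≤ b') (h1 : b' ≤ b) (h2 : b ≤ a) (h3 : a ≤ a')
    (hsum : a + b = a' + b') :
    Real.negMulLog a' + Real.negMulLog b' ≤ Real.negMulLog a + Real.negMulLog b := by
  rcases eq_or_lt_of_le (h1.trans (h2.trans h3)) with h | hd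
  · have hab : a = b' := le_antisymm (by linarith) (by linarith)
    have hbb : b = b' := le_antisymm (by linarith) (by linarith)
    have haa : a' = b' := h.symm
    rw [hab, hbb, haa]
  · have hd' : 0 < a' - b' := by linarith
    set t : ℝ := (a - b') / (a' - b') with ht
    have ht0 : 0 ≤ t := div_nonneg (by linarith) hd'.le
    have ht1 : t ≤ 1 := (div_le_one hd').2 (by linarith)
    have htm : t * (a' - b') = a - b' := div_mul_cancel₀ _ hd'.ne'
    have ha_eq : t * a' + (1 - t) * b' = a := by nlinarith [htm]
    have hb_eq : (1 - t) * a' + t * b' = b := by nlinarith [htm]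
    have hc := Real.strictConcaveOn_negMulLog.concaveOn
    have ha'm : a' ∈ Set.Ici (0:ℝ) := Set.mem_Ici.2 (hb'.trans (by linarith))
    have hb'm : b' ∈ Set.Ici (0:ℝ) := Set.mem_Ici.2 hb'
    have H1 := hc.2 ha'm hb'm ht0 (by linarith : (0:ℝ) ≤ 1 - t) (by ring)
    have H2 := hc.2 ha'm hb'm (by linarith : (0:ℝ) ≤ 1 - t) ht0 (by ring)
    simp only [smul_eq_mul] at H1 H2
    rw [ha_eq] at H1
    rw [hb_eq] at H2
    linarith

lemma pair_le {a b a' b' : ℝ} (ha : 0 ≤ a) (hb : 0 ≤ b) (ha' : 0 ≤ a') (hb' : 0 ≤ b')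
    (hsum : a + b = a' + b') (habs : |a - b| ≤ |a' - b'|) :
    Real.negMulLog a' + Real.negMulLog b' ≤ Real.negMulLog a + Real.negMulLog b := by
  rcases le_total b a with h | h <;> rcases le_total b' a' with h' | h'
  · rw [abs_of_nonneg (by linarith), abs_of_nonneg (by linarith)] at habs
    exact pair_le_aux hb' (by linarith) h (by linarith) hsum
  · rw [abs_of_nonneg (by linarith), abs_of_nonpos (by linarith)] at habs
    rw [add_comm (Real.negMulLog a')]
    exact pair_le_aux ha' (by linarith) h (by linarith) (by linarith)
  · rw [abs_of_nonpos (by linarith), abs_of_nonneg (by linarith)] at habs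
    rw [add_comm (Real.negMulLog a) ]
    exact pair_le_aux hb' (by linarith) h (by linarith) (by linarith)
  · rw [abs_of_nonpos (by linarith), abs_of_nonpos (by linarith)] at habs
    rw [add_comm (Real.negMulLog a), add_comm (Real.negMulLog a')]
    exact pair_le_aux ha' (by linarith) h (by linarith) (by linarith)


lemma ent_pair_le {Ω : Type*} [Fintype Ω] (σ : Ω → Ω) (hσ : Function.Involutive σ)
    (p p' : Ω → ℝ) (hp : ∀ y, 0 ≤ p y) (hp' : ∀ y, 0 ≤ p' y)
    (hsum : ∀ y, p y + p (σ y) = p' y + p' (σ y))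
    (habs : ∀ y, |p y - p (σ y)| ≤ |p' y - p' (σ y)|) :
    ent p' ≤ ent p := by
  rw [ent_eq, ent_eq]
  have hlog : (0:ℝ) < Real.log 2 := Real.log_pos one_lt_two
  have h2 : ∀ q : Ω → ℝ, 2 * ∑ x, Real.negMulLog (q x)
      = ∑ x, (Real.negMulLog (q x) + Real.negMulLog (q (σ x))) := by
    intro q
    rw [Finset.sum_add_distrib, two_mul]
    congr 1
    exact (Fintype.sum_bijective σ hσ.bijective _ _ fun x => rfl).symm
  have hpt : ∑ x, (Real.negMulLog (p' x) + Real.negMulLog (p' (σ x)))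
      ≤ ∑ x, (Real.negMulLog (p x) + Real.negMulLog (p (σ x))) :=
    Finset.sum_le_sum fun x _ =>
      pair_le (hp x) (hp (σ x)) (hp' x) (hp' (σ x)) (hsum x) (habs x)
  have key : ∑ x, Real.negMulLog (p' x) ≤ ∑ x, Real.negMulLog (p x) := by
    linarith [h2 p, h2 p']
  gcongr


/-- One step of the shifting procedure. -/
def shiftStepRel {n : ℕ} (S T : Finset (Fin n → Bool)) : Prop :=
  ∃ i : Fin n, (shiftSet S i).Nonempty ∧ (∀ j : Fin n, j < i → shiftSet S j = ∅) ∧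
    T = (S \ shiftSet S i) ∪ (shiftSet S i).image (fun x => Function.update x i false)

/-- One shifting step does not increase the output entropy of a BSC. -/
theorem shift_step_entropy (n : ℕ) (α : ℝ) (hα : α ∈ Set.Icc (0:ℝ) (1/2))
    (S T : Finset (Fin n → Bool)) (hS : S.Nonempty) (hstep : shiftStepRel S T) :
    ent (bscOut T α) ≤ ent (bscOut S α) := by
  classical
  obtain ⟨i, hne, -, hT⟩ := hstep
  obtain ⟨hα0, hα2⟩ := hα
  have hα2' : α ≤ 1/2 := hα2
  set sh := shiftSet S i with hshdef
  have hsub : sh ⊆ S := Finset.filter_subset _ _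
  set W : (Fin n → Bool) → (Fin n → Bool) → ℝ :=
    fun y x => ∏ j, (if y j = x j then 1 - α else α) with hWdef
  set R : (Fin n → Bool) → (Fin n → Bool) → ℝ :=
    fun y x => ∏ j ∈ Finset.univ.erase i, (if y j = x j then 1 - α else α) with hRdef
  set σ : (Fin n → Bool) → (Fin n → Bool) := fun y => Function.update y i (!(y i)) with hσdef
  have hσi : ∀ y, σ y i = !(y i) := fun y => Function.update_self i _ y
  have hσ : Function.Involutive σ := by
    intro y
    simp only [hσdef, Function.update_self, Bool.not_not, Function.update_idem,
      Function.update_eq_self]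
  -- basic nonnegativity
  have hfac0 : ∀ (b c : Bool), 0 ≤ (if b = c then 1 - α else α) := by
    intro b c; split <;> linarith
  have hR0 : ∀ y x, 0 ≤ R y x := fun y x => Finset.prod_nonneg fun j _ => hfac0 _ _
  have hW0 : ∀ y x, 0 ≤ W y x := fun y x => Finset.prod_nonneg fun j _ => hfac0 _ _
  have hWsplit : ∀ y x, W y x = (if y i = x i then 1 - α else α) * R y x := fun y x =>
    (Finset.mul_prod_erase Finset.univ _ (Finset.mem_univ i)).symm
  have hRσ : ∀ y x, R (σ y) x = R y x := by
    intro y x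
    refine Finset.prod_congr rfl fun j hj => ?_
    have hji : j ≠ i := Finset.ne_of_mem_erase hj
    rw [hσdef]; simp only [Function.update_of_ne hji]
  have hRup : ∀ (y x : Fin n → Bool) (c : Bool), R y (Function.update x i c) = R y x := by
    intro y x c
    refine Finset.prod_congr rfl fun j hj => ?_
    have hji : j ≠ i := Finset.ne_of_mem_erase hj
    simp only [Function.update_of_ne hji]
  have hpair : ∀ y x, W y x + W (σ y) x = R y x := by
    intro y x
    rw [hWsplit, hWsplit, hRσ, hσi]
    rcases Bool.dichotomy (y i) with h | h <;> rcases Bool.dichotomy (x i) with h' | h' <;>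
      simp only [h, h'] <;> norm_num <;> try ring
  have hdiff : ∀ y x, y i = false →
      W y x - W (σ y) x = (if x i = false then (1 - 2*α) else -(1 - 2*α)) * R y x := by
    intro y x hy
    rw [hWsplit, hWsplit, hRσ, hσi, hy]
    rcases Bool.dichotomy (x i) with h' | h' <;> simp only [h'] <;> norm_num <;> try ring
  -- membership in sh
  have hmem : ∀ x ∈ sh, x ∈ S ∧ x i = true ∧ Function.update x i false ∉ S := by
    intro x hx
    have := Finset.mem_filter.1 hx
    exact ⟨this.1, this.2.1, this.2.2⟩
  have hinj : ∀ x1 x2 : Fin n → Bool, x1 i = true → x2 i = true →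
      Function.update x1 i false = Function.update x2 i false → x1 = x2 := by
    intro x1 x2 h1 h2 h
    funext j
    by_cases hj : j = i
    · subst hj; rw [h1, h2]
    · have := congrFun h j
      simpa [Function.update_of_ne hj] using this
  have hinjsh : ∀ x1 ∈ sh, ∀ x2 ∈ sh, (fun x => Function.update x i false) x1 =
      (fun x => Function.update x i false) x2 → x1 = x2 := by
    intro x1 h1 x2 h2 h
    exact hinj x1 x2 (hmem x1 h1).2.1 (hmem x2 h2).2.1 h
  have hdisj : Disjoint (S \ sh) (sh.image (fun x => Function.update x i false)) := by
    rw [Finset.disjoint_right]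
    intro x hx hx2
    obtain ⟨z, hz, rfl⟩ := Finset.mem_image.1 hx
    exact (hmem z hz).2.2 (Finset.mem_sdiff.1 hx2).1
  have hcard : T.card = S.card := by
    rw [hT, Finset.card_union_of_disjoint hdisj, Finset.card_image_of_injOn
      (fun x1 h1 x2 h2 h => hinjsh x1 h1 x2 h2 h), Finset.card_sdiff_of_subset hsub,
      Nat.sub_add_cancel (Finset.card_le_card hsub)]
  have hsumT : ∀ f : (Fin n → Bool) → ℝ, ∑ x ∈ T, f x
      = ∑ x ∈ S \ sh, f x + ∑ x ∈ sh, f (Function.update x i false) := by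
    intro f
    rw [hT, Finset.sum_union hdisj, Finset.sum_image hinjsh]
  have houtS : ∀ y, bscOut S α y = (S.card : ℝ)⁻¹ * ∑ x ∈ S, W y x := fun _ => rfl
  have houtT : ∀ y, bscOut T α y = (S.card : ℝ)⁻¹ * ∑ x ∈ T, W y x := by
    intro y; rw [bscOut, hcard]
  have hinv0 : (0:ℝ) ≤ ((S.card : ℝ))⁻¹ := by positivity
  refine ent_pair_le σ hσ (bscOut S α) (bscOut T α) ?_ ?_ ?_ ?_
  · intro y; rw [houtS]
    exact mul_nonneg hinv0 (Finset.sum_nonneg fun x _ => hW0 y x)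
  · intro y; rw [houtT]
    exact mul_nonneg hinv0 (Finset.sum_nonneg fun x _ => hW0 y x)
  · -- paired sums are preserved
    intro y
    rw [houtS, houtS, houtT, houtT, ← mul_add, ← mul_add, ← Finset.sum_add_distrib,
      ← Finset.sum_add_distrib]
    congr 1
    rw [hsumT]
    have h1 : ∀ x ∈ sh, W y (Function.update x i false) + W (σ y) (Function.update x i false)
        = W y x + W (σ y) x := by
      intro x hx
      rw [hpair, hpair, hRup]
    rw [Finset.sum_congr rfl h1]
    exact (Finset.sum_sdiff hsub).symm
  · -- paired differences grow in absolute value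
    intro y
    rw [houtS, houtS, houtT, houtT, ← mul_sub, ← mul_sub, ← Finset.sum_sub_distrib,
      ← Finset.sum_sub_distrib, abs_mul, abs_mul]
    refine mul_le_mul_of_nonneg_left ?_ (abs_nonneg _)
    -- main claim for y with y i = false
    have main : ∀ y : Fin n → Bool, y i = false →
        |∑ x ∈ S, (W y x - W (σ y) x)| ≤ |∑ x ∈ T, (W y x - W (σ y) x)| := by
      intro y hy
      set A : ℝ := ∑ x ∈ S \ sh, (W y x - W (σ y) x) with hA
      set B : ℝ := ∑ x ∈ sh, R y x with hB
      have hB0 : 0 ≤ B := Finset.sum_nonneg fun x _ => hR0 y x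
      have hShS : ∑ x ∈ sh, (W y x - W (σ y) x) = -((1 - 2*α) * B) := by
        rw [hB, Finset.mul_sum, ← Finset.sum_neg_distrib]
        refine Finset.sum_congr rfl fun x hx => ?_
        rw [hdiff y x hy, (hmem x hx).2.1, if_neg (by simp : ¬(true = false))]
        ring
      have hDS : ∑ x ∈ S, (W y x - W (σ y) x) = A + -((1 - 2*α) * B) := by
        rw [hA, ← hShS]; exact (Finset.sum_sdiff hsub).symm
      have hDT : ∑ x ∈ T, (W y x - W (σ y) x) = A + (1 - 2*α) * B := by
        rw [hsumT, hA, hB, Finset.mul_sum]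
        congr 1
        refine Finset.sum_congr rfl fun x hx => ?_
        rw [hdiff y _ hy, Function.update_self, hRup]
        norm_num
      -- A ≥ 0
      have hA0 : 0 ≤ A := by
        rw [hA, ← Finset.sum_filter_add_sum_filter_not (S \ sh) (fun x => x i = false)]
        have e1 : ∑ x ∈ (S \ sh).filter (fun x => x i = false), (W y x - W (σ y) x)
            = (1 - 2*α) * ∑ x ∈ (S \ sh).filter (fun x => x i = false), R y x := by
          rw [Finset.mul_sum]
          refine Finset.sum_congr rfl fun x hx => ?_
          rw [hdiff y x hy, (Finset.mem_filter.1 hx).2]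
          norm_num
        have e2 : ∑ x ∈ (S \ sh).filter (fun x => ¬ x i = false), (W y x - W (σ y) x)
            = -((1 - 2*α) * ∑ x ∈ (S \ sh).filter (fun x => ¬ x i = false), R y x) := by
          rw [Finset.mul_sum, ← Finset.sum_neg_distrib]
          refine Finset.sum_congr rfl fun x hx => ?_
          have hx1 : x i = true := by
            have := (Finset.mem_filter.1 hx).2
            exact Bool.not_eq_false _ ▸ (by simpa using this)
          rw [hdiff y x hy, hx1, if_neg (by simp : ¬(true = false))]
          ring
        rw [e1, e2]
        have hle : ∑ x ∈ (S \ sh).filter (fun x => ¬ x i = false), R y x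
            ≤ ∑ x ∈ (S \ sh).filter (fun x => x i = false), R y x := by
          rw [show ∑ x ∈ (S \ sh).filter (fun x => ¬ x i = false), R y x
              = ∑ x ∈ ((S \ sh).filter (fun x => ¬ x i = false)).image
                  (fun x => Function.update x i false), R y x from ?_]
          · refine Finset.sum_le_sum_of_subset_of_nonneg ?_ (fun x _ _ => hR0 y x)
            intro z hz
            obtain ⟨x, hx, rfl⟩ := Finset.mem_image.1 hz
            obtain ⟨hxS, hxtrue⟩ := Finset.mem_filter.1 hx
            obtain ⟨hxS', hxnsh⟩ := Finset.mem_sdiff.1 hxS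
            have hxt : x i = true := by simpa using hxtrue
            have hdn : Function.update x i false ∈ S := by
              by_contra hcon
              exact hxnsh (Finset.mem_filter.2 ⟨hxS', hxt, hcon⟩)
            refine Finset.mem_filter.2 ⟨Finset.mem_sdiff.2 ⟨hdn, ?_⟩, ?_⟩
            · intro hcon
              have := (hmem _ hcon).2.1
              rw [Function.update_self] at this
              exact absurd this (by simp)
            · simp [Function.update_self]
          · rw [Finset.sum_image]
            · refine Finset.sum_congr rfl fun x hx => (hRup y x false).symm
            · intro x1 h1 x2 h2 h
              have hxt1 : x1 i = true := by simpa using (Finset.mem_filter.1 h1).2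
              have hxt2 : x2 i = true := by simpa using (Finset.mem_filter.1 h2).2
              exact hinj x1 x2 hxt1 hxt2 h
        nlinarith [hle]
      rw [hDS, hDT]
      have hc0 : 0 ≤ (1 - 2*α) * B := mul_nonneg (by linarith) hB0
      rw [abs_of_nonneg (by linarith : (0:ℝ) ≤ A + (1 - 2*α) * B)]
      refine abs_le.2 ⟨by linarith, by linarith⟩
    by_cases hy : y i = false
    · exact main y hy
    · have hyt : y i = true := by simpa using hy
      have hz : σ y i = false := by rw [hσi, hyt]; rfl
      have hflip : ∀ U : Finset (Fin n → Bool),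
          ∑ x ∈ U, (W y x - W (σ y) x) = -∑ x ∈ U, (W (σ y) x - W (σ (σ y)) x) := by
        intro U
        rw [← Finset.sum_neg_distrib]
        refine Finset.sum_congr rfl fun x _ => ?_
        rw [hσ y]; ring
      rw [hflip S, hflip T, abs_neg, abs_neg]
      exact main (σ y) hz
end

section
/- Sufficiency of monotone sets: H_m^n(α) = min over monotone sets S ⊆ {0,1}^n with |S| = m of H(U_S ⊕ Z^n). -/
/-- A set `S ⊆ {0,1}^n` is monotone (downward closed for the coordinatewise order). -/
def MonoSet {n : ℕ} (S : Finset (Fin n → Bool)) : Prop :=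
  ∀ x ∈ S, ∀ y : Fin n → Bool, (∀ i, y i ≤ x i) → y ∈ S

open Finset Real

namespace MonoShift

variable {n : ℕ}

noncomputable def w (α : ℝ) (y x : Fin n → Bool) : ℝ :=
  ∏ i, (if y i = x i then 1 - α else α)

noncomputable def rst (α : ℝ) (i : Fin n) (y x : Fin n → Bool) : ℝ :=
  ∏ j ∈ Finset.univ.erase i, (if y j = x j then 1 - α else α)

lemma w_eq (α : ℝ) (i : Fin n) (y x : Fin n → Bool) :
    w α y x = (if y i = x i then 1 - α else α) * rst α i y x := by
  rw [w, rst, ← Finset.mul_prod_erase Finset.univ _ (Finset.mem_univ i)]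

lemma rst_nonneg {α : ℝ} (h0 : 0 ≤ α) (h1 : α ≤ 1) (i : Fin n) (y x : Fin n → Bool) :
    0 ≤ rst α i y x := by
  refine Finset.prod_nonneg fun j _ => ?_
  split <;> linarith

lemma w_nonneg {α : ℝ} (h0 : 0 ≤ α) (h1 : α ≤ 1) (y x : Fin n → Bool) :
    0 ≤ w α y x := by
  refine Finset.prod_nonneg fun j _ => ?_
  split <;> linarith

def flipAt (i : Fin n) (y : Fin n → Bool) : Fin n → Bool := Function.update y i (!y i)

lemma flipAt_apply_self (i : Fin n) (y : Fin n → Bool) : flipAt i y i = !y i := by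
  simp [flipAt]

lemma flipAt_apply_ne (i j : Fin n) (y : Fin n → Bool) (h : j ≠ i) :
    flipAt i y j = y j := by
  simp [flipAt, Function.update_of_ne h]

lemma flipAt_invol (i : Fin n) : Function.Involutive (flipAt i) := by
  intro y
  funext j
  by_cases h : j = i
  · subst h; simp [flipAt]
  · rw [flipAt_apply_ne _ _ _ h, flipAt_apply_ne _ _ _ h]

lemma rst_flipAt (α : ℝ) (i : Fin n) (y x : Fin n → Bool) :
    rst α i (flipAt i y) x = rst α i y x := by
  refine Finset.prod_congr rfl fun j hj => ?_
  rw [flipAt_apply_ne _ _ _ (Finset.ne_of_mem_erase hj)]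

lemma rst_update (α : ℝ) (i : Fin n) (y x : Fin n → Bool) (b : Bool) :
    rst α i y (Function.update x i b) = rst α i y x := by
  refine Finset.prod_congr rfl fun j hj => ?_
  rw [Function.update_of_ne (Finset.ne_of_mem_erase hj)]

/-- key identity: for `x i = true`, pushing `x` down at `i` is the same as flipping `y` at `i`. -/
lemma w_update_eq_flip (α : ℝ) (i : Fin n) (y x : Fin n → Bool) (hx : x i = true) :
    w α y (Function.update x i false) = w α (flipAt i y) x := by
  rw [w_eq α i, w_eq α i, rst_update, rst_flipAt]
  congr 1
  rw [Function.update_self, flipAt_apply_self, hx]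
  cases h : y i <;> simp


def shiftT (i : Fin n) (S : Finset (Fin n → Bool)) : Finset (Fin n → Bool) :=
  S.filter (fun x => x i = true ∧ Function.update x i false ∉ S)

def shiftSet (i : Fin n) (S : Finset (Fin n → Bool)) : Finset (Fin n → Bool) :=
  (S \ shiftT i S) ∪ (shiftT i S).image (fun x => Function.update x i false)

lemma shiftT_subset (i : Fin n) (S : Finset (Fin n → Bool)) : shiftT i S ⊆ S :=
  Finset.filter_subset _ _

lemma mem_shiftT {i : Fin n} {S : Finset (Fin n → Bool)} {x : Fin n → Bool} :
    x ∈ shiftT i S ↔ x ∈ S ∧ x i = true ∧ Function.update x i false ∉ S := by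
  simp [shiftT]

lemma update_injOn (i : Fin n) (S : Finset (Fin n → Bool)) :
    ∀ x ∈ shiftT i S, ∀ y ∈ shiftT i S,
      Function.update x i false = Function.update y i false → x = y := by
  intro x hx y hy h
  rw [mem_shiftT] at hx hy
  funext j
  by_cases hj : j = i
  · subst hj; rw [hx.2.1, hy.2.1]
  · have := congrFun h j
    rwa [Function.update_of_ne hj, Function.update_of_ne hj] at this

lemma image_disjoint (i : Fin n) (S : Finset (Fin n → Bool)) :
    Disjoint (S \ shiftT i S) ((shiftT i S).image (fun x => Function.update x i false)) := by
  rw [Finset.disjoint_right]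
  intro a ha has
  rw [Finset.mem_image] at ha
  obtain ⟨x, hx, rfl⟩ := ha
  rw [mem_shiftT] at hx
  exact hx.2.2 (Finset.mem_sdiff.mp has).1

lemma card_shiftSet (i : Fin n) (S : Finset (Fin n → Bool)) :
    (shiftSet i S).card = S.card := by
  rw [shiftSet, Finset.card_union_of_disjoint (image_disjoint i S),
    Finset.card_image_of_injOn (update_injOn i S),
    Finset.card_sdiff_of_subset (shiftT_subset i S)]
  have := Finset.card_le_card (shiftT_subset i S)
  omega

noncomputable def P (α : ℝ) (i : Fin n) (S : Finset (Fin n → Bool)) (y : Fin n → Bool) : ℝ :=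
  ∑ x ∈ S \ shiftT i S, w α y x

noncomputable def Q (α : ℝ) (i : Fin n) (S : Finset (Fin n → Bool)) (y : Fin n → Bool) : ℝ :=
  ∑ x ∈ shiftT i S, w α y x

lemma bscOut_eq (α : ℝ) (i : Fin n) (S : Finset (Fin n → Bool)) (y : Fin n → Bool) :
    bscOut S α y = (S.card : ℝ)⁻¹ * (P α i S y + Q α i S y) := by
  rw [bscOut, P, Q, ← Finset.sum_sdiff (shiftT_subset i S)]
  rfl

lemma bscOut_shift_eq (α : ℝ) (i : Fin n) (S : Finset (Fin n → Bool)) (y : Fin n → Bool) :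
    bscOut (shiftSet i S) α y = (S.card : ℝ)⁻¹ * (P α i S y + Q α i S (flipAt i y)) := by
  have hcard : (shiftSet i S).card = S.card := card_shiftSet i S
  rw [bscOut, shiftSet, Finset.sum_union (image_disjoint i S),
    Finset.sum_image (update_injOn i S), ← shiftSet, hcard]
  congr 1
  congr 1
  rw [Q]
  refine Finset.sum_congr rfl fun x hx => ?_
  rw [mem_shiftT] at hx
  exact (w_update_eq_flip α i y x hx.2.1 : _)

lemma update_inj_aux {i : Fin n} {x y : Fin n → Bool} (hx : x i = true) (hy : y i = true)
    (h : Function.update x i false = Function.update y i false) : x = y := by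
  funext j
  by_cases hj : j = i
  · subst hj; rw [hx, hy]
  · have := congrFun h j
    rwa [Function.update_of_ne hj, Function.update_of_ne hj] at this

lemma Q_flip_le {α : ℝ} (h0 : 0 ≤ α) (h2 : α ≤ 1/2) (i : Fin n)
    (S : Finset (Fin n → Bool)) (y : Fin n → Bool) (hy : y i = true) :
    Q α i S (flipAt i y) ≤ Q α i S y := by
  refine Finset.sum_le_sum fun x hx => ?_
  rw [mem_shiftT] at hx
  rw [w_eq α i, w_eq α i, rst_flipAt, flipAt_apply_self, hy, hx.2.1]
  simp only [Bool.not_true]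
  have hr : 0 ≤ rst α i y x := rst_nonneg h0 (by linarith) i y x
  norm_num
  nlinarith

lemma P_le_P_flip {α : ℝ} (h0 : 0 ≤ α) (h2 : α ≤ 1/2) (i : Fin n)
    (S : Finset (Fin n → Bool)) (y : Fin n → Bool) (hy : y i = true) :
    P α i S y ≤ P α i S (flipAt i y) := by
  classical
  set U := S \ shiftT i S with hU
  set A := U.filter (fun x => x i = true) with hA
  set B := U.filter (fun x => ¬ (x i = true)) with hB
  have h1 : α ≤ 1 := by linarith
  have hPy : P α i S y = ∑ x ∈ A, w α y x + ∑ x ∈ B, w α y x := by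
    rw [P, ← Finset.sum_filter_add_sum_filter_not U (fun x => x i = true)]
  have hPy' : P α i S (flipAt i y) =
      ∑ x ∈ A, w α (flipAt i y) x + ∑ x ∈ B, w α (flipAt i y) x := by
    rw [P, ← Finset.sum_filter_add_sum_filter_not U (fun x => x i = true)]
  have hAy : ∀ x ∈ A, w α y x = (1 - α) * rst α i y x := by
    intro x hx
    have hxi : x i = true := (Finset.mem_filter.mp hx).2
    rw [w_eq α i, hy, hxi, if_pos rfl]
  have hAy' : ∀ x ∈ A, w α (flipAt i y) x = α * rst α i y x := by
    intro x hx
    have hxi : x i = true := (Finset.mem_filter.mp hx).2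
    rw [w_eq α i, rst_flipAt, flipAt_apply_self, hy, hxi]
    simp
  have hBy : ∀ x ∈ B, w α y x = α * rst α i y x := by
    intro x hx
    have hxi : x i = false := by
      have := (Finset.mem_filter.mp hx).2; simpa using this
    rw [w_eq α i, hy, hxi]
    simp
  have hBy' : ∀ x ∈ B, w α (flipAt i y) x = (1 - α) * rst α i y x := by
    intro x hx
    have hxi : x i = false := by
      have := (Finset.mem_filter.mp hx).2; simpa using this
    rw [w_eq α i, rst_flipAt, flipAt_apply_self, hy, hxi]
    simp
  rw [hPy, hPy', Finset.sum_congr rfl hAy, Finset.sum_congr rfl hAy',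
    Finset.sum_congr rfl hBy, Finset.sum_congr rfl hBy',
    ← Finset.mul_sum, ← Finset.mul_sum, ← Finset.mul_sum, ← Finset.mul_sum]
  set RA := ∑ x ∈ A, rst α i y x with hRA
  set RB := ∑ x ∈ B, rst α i y x with hRB
  have hsub : A.image (fun x => Function.update x i false) ⊆ B := by
    intro z hz
    rw [Finset.mem_image] at hz
    obtain ⟨x, hx, rfl⟩ := hz
    have hxU : x ∈ U := (Finset.mem_filter.mp hx).1
    have hxi : x i = true := (Finset.mem_filter.mp hx).2
    rw [hU, Finset.mem_sdiff] at hxU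
    have hxS : x ∈ S := hxU.1
    have hxnT : x ∉ shiftT i S := hxU.2
    have hdS : Function.update x i false ∈ S := by
      by_contra hc
      exact hxnT (mem_shiftT.mpr ⟨hxS, hxi, hc⟩)
    have hdnT : Function.update x i false ∉ shiftT i S := by
      intro hc
      rw [mem_shiftT] at hc
      simp at hc
    rw [hB, Finset.mem_filter]
    refine ⟨Finset.mem_sdiff.mpr ⟨hdS, hdnT⟩, by simp⟩
  have hinj : ∀ x ∈ A, ∀ x' ∈ A,
      Function.update x i false = Function.update x' i false → x = x' := by
    intro x hx x' hx' h
    exact update_inj_aux (Finset.mem_filter.mp hx).2 (Finset.mem_filter.mp hx').2 h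
  have hRAeq : RA = ∑ z ∈ A.image (fun x => Function.update x i false), rst α i y z := by
    rw [Finset.sum_image hinj]
    exact (Finset.sum_congr rfl fun x _ => (rst_update α i y x false).symm)
  have hRle : RA ≤ RB := by
    rw [hRAeq]
    exact Finset.sum_le_sum_of_subset_of_nonneg hsub
      (fun x _ _ => rst_nonneg h0 h1 i y x)
  nlinarith

lemma PQ_mul_nonpos {α : ℝ} (h0 : 0 ≤ α) (h2 : α ≤ 1/2) (i : Fin n)
    (S : Finset (Fin n → Bool)) (y : Fin n → Bool) :
    (P α i S y - P α i S (flipAt i y)) * (Q α i S y - Q α i S (flipAt i y)) ≤ 0 := by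
  cases hy : y i with
  | true =>
    have h1 := P_le_P_flip h0 h2 i S y hy
    have h2' := Q_flip_le h0 h2 i S y hy
    exact mul_nonpos_of_nonpos_of_nonneg (by linarith) (by linarith)
  | false =>
    have hy' : flipAt i y i = true := by rw [flipAt_apply_self, hy]; rfl
    have hinv : flipAt i (flipAt i y) = y := flipAt_invol i y
    have h1 := P_le_P_flip h0 h2 i S (flipAt i y) hy'
    have h2' := Q_flip_le h0 h2 i S (flipAt i y) hy'
    rw [hinv] at h1 h2'
    exact mul_nonpos_of_nonneg_of_nonpos (by linarith) (by linarith)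
lemma pair_sorted {a b a' b' : ℝ} (ha' : 0 ≤ a') (hb' : 0 ≤ b')
    (h1 : a' ≤ a) (h2 : a ≤ b) (h3 : b ≤ b') (hsum : a + b = a' + b') :
    Real.negMulLog a' + Real.negMulLog b' ≤ Real.negMulLog a + Real.negMulLog b := by
  rcases eq_or_lt_of_le (le_trans h1 (le_trans h2 h3) : a' ≤ b') with heq | hlt
  · have e1 : a = a' := by linarith
    have e2 : b = b' := by linarith
    rw [e1, e2]
  · have hc : b' - a' ≠ 0 := by linarith
    have hcpos : (0:ℝ) < b' - a' := by linarith
    have key : ∀ t, a' ≤ t → t ≤ b' →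
        ((b' - t)/(b' - a')) * Real.negMulLog a' + ((t - a')/(b' - a')) * Real.negMulLog b'
          ≤ Real.negMulLog t := by
      intro t ht1 ht2
      have hco := Real.concaveOn_negMulLog.2 (Set.mem_Ici.mpr ha') (Set.mem_Ici.mpr hb')
        (show 0 ≤ (b' - t)/(b' - a') from div_nonneg (by linarith) hcpos.le)
        (show 0 ≤ (t - a')/(b' - a') from div_nonneg (by linarith) hcpos.le)
        (show (b' - t)/(b' - a') + (t - a')/(b' - a') = 1 by
          rw [← add_div, div_eq_one_iff_eq hc]; ring)
      have hpt : ((b' - t)/(b' - a')) • a' + ((t - a')/(b' - a')) • b' = t := by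
        simp only [smul_eq_mul]
        field_simp
        ring
      rw [hpt] at hco
      simpa [smul_eq_mul] using hco
    have k1 := key a h1 (by linarith)
    have k2 := key b (by linarith) h3
    have e1 : (b' - a)/(b' - a') + (b' - b)/(b' - a') = 1 := by
      rw [← add_div, div_eq_one_iff_eq hc]; linarith
    have e2 : (a - a')/(b' - a') + (b - a')/(b' - a') = 1 := by
      rw [← add_div, div_eq_one_iff_eq hc]; linarith
    calc Real.negMulLog a' + Real.negMulLog b'
        = ((b' - a)/(b' - a') + (b' - b)/(b' - a')) * Real.negMulLog a'
          + ((a - a')/(b' - a') + (b - a')/(b' - a')) * Real.negMulLog b' := by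
          rw [e1, e2]; ring
      _ = ((b' - a)/(b' - a') * Real.negMulLog a' + (a - a')/(b' - a') * Real.negMulLog b')
          + ((b' - b)/(b' - a') * Real.negMulLog a' + (b - a')/(b' - a') * Real.negMulLog b') := by
          ring
      _ ≤ Real.negMulLog a + Real.negMulLog b := add_le_add k1 k2

lemma pair_sorted2 {a b a' b' : ℝ} (ha : 0 ≤ a) (ha' : 0 ≤ a') (hb' : 0 ≤ b')
    (hab : a ≤ b) (hab' : a' ≤ b') (hsum : a + b = a' + b') (hsp : b - a ≤ b' - a') :
    Real.negMulLog a' + Real.negMulLog b' ≤ Real.negMulLog a + Real.negMulLog b :=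
  pair_sorted ha' hb' (by linarith) hab (by linarith) hsum

lemma pair_spread {a b a' b' : ℝ} (ha : 0 ≤ a) (hb : 0 ≤ b) (ha' : 0 ≤ a') (hb' : 0 ≤ b')
    (hsum : a + b = a' + b') (hsp : |a - b| ≤ |a' - b'|) :
    Real.negMulLog a' + Real.negMulLog b' ≤ Real.negMulLog a + Real.negMulLog b := by
  rcases le_total a b with hab | hab <;> rcases le_total a' b' with hab' | hab'
  · exact pair_sorted2 ha ha' hb' hab hab' hsum
      (by rw [abs_of_nonpos (by linarith), abs_of_nonpos (by linarith)] at hsp; linarith)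
  · rw [add_comm (Real.negMulLog a') (Real.negMulLog b')]
    exact pair_sorted2 ha hb' ha' hab hab' (by linarith)
      (by rw [abs_of_nonpos (by linarith), abs_of_nonneg (by linarith)] at hsp; linarith)
  · rw [add_comm (Real.negMulLog a) (Real.negMulLog b)]
    exact pair_sorted2 hb ha' hb' hab hab' (by linarith)
      (by rw [abs_of_nonneg (by linarith), abs_of_nonpos (by linarith)] at hsp; linarith)
  · rw [add_comm (Real.negMulLog a) (Real.negMulLog b),
      add_comm (Real.negMulLog a') (Real.negMulLog b')]
    exact pair_sorted2 hb hb' ha' hab hab' (by linarith)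
      (by rw [abs_of_nonneg (by linarith), abs_of_nonneg (by linarith)] at hsp; linarith)
lemma bscOut_nonneg {α : ℝ} (h0 : 0 ≤ α) (h1 : α ≤ 1) (S : Finset (Fin n → Bool))
    (y : Fin n → Bool) : 0 ≤ bscOut S α y := by
  rw [bscOut]
  refine mul_nonneg (by positivity) (Finset.sum_nonneg fun x _ => ?_)
  exact w_nonneg h0 h1 y x

lemma ent_eq {Ω : Type*} [Fintype Ω] (p : Ω → ℝ) :
    ent p = (Real.log 2)⁻¹ * ∑ x, Real.negMulLog (p x) := by
  rw [ent, Finset.mul_sum]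
  refine Finset.sum_congr rfl fun x _ => ?_
  rw [Real.negMulLog, Real.logb]
  field_simp

lemma abs_add_le_abs_sub {s t : ℝ} (h : s * t ≤ 0) : |s + t| ≤ |s - t| := by
  rw [← Real.sqrt_sq_eq_abs, ← Real.sqrt_sq_eq_abs]
  exact Real.sqrt_le_sqrt (by nlinarith)

lemma sum_flip (i : Fin n) (f : (Fin n → Bool) → ℝ) :
    ∑ y, f (flipAt i y) = ∑ y, f y :=
  Fintype.sum_bijective _ (flipAt_invol i).bijective _ _ (fun _ => rfl)

lemma ent_shift_le {α : ℝ} (h0 : 0 ≤ α) (h2 : α ≤ 1/2) (i : Fin n)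
    (S : Finset (Fin n → Bool)) :
    ent (bscOut (shiftSet i S) α) ≤ ent (bscOut S α) := by
  have h1 : α ≤ 1 := by linarith
  rw [ent_eq, ent_eq]
  have hlog : (0:ℝ) ≤ (Real.log 2)⁻¹ := by
    have := Real.log_pos (by norm_num : (1:ℝ) < 2)
    positivity
  refine mul_le_mul_of_nonneg_left ?_ hlog
  -- pair up y with flipAt i y
  have key : ∀ y : Fin n → Bool,
      Real.negMulLog (bscOut (shiftSet i S) α y)
        + Real.negMulLog (bscOut (shiftSet i S) α (flipAt i y))
      ≤ Real.negMulLog (bscOut S α y) + Real.negMulLog (bscOut S α (flipAt i y)) := by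
    intro y
    have hinv : flipAt i (flipAt i y) = y := flipAt_invol i y
    have e1 := bscOut_eq α i S y
    have e2 := bscOut_eq α i S (flipAt i y)
    have e3 := bscOut_shift_eq α i S y
    have e4 := bscOut_shift_eq α i S (flipAt i y)
    rw [hinv] at e4
    have hc : (0:ℝ) ≤ (S.card : ℝ)⁻¹ := by positivity
    refine pair_spread (bscOut_nonneg h0 h1 S y) (bscOut_nonneg h0 h1 S (flipAt i y))
      (bscOut_nonneg h0 h1 (shiftSet i S) y) (bscOut_nonneg h0 h1 (shiftSet i S) (flipAt i y))
      ?_ ?_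
    · rw [e1, e2, e3, e4]; ring
    · rw [e1, e2, e3, e4]
      have hdiff1 : (S.card : ℝ)⁻¹ * (P α i S y + Q α i S y)
          - (S.card : ℝ)⁻¹ * (P α i S (flipAt i y) + Q α i S (flipAt i y))
          = (S.card : ℝ)⁻¹ * ((P α i S y - P α i S (flipAt i y))
            + (Q α i S y - Q α i S (flipAt i y))) := by ring
      have hdiff2 : (S.card : ℝ)⁻¹ * (P α i S y + Q α i S (flipAt i y))
          - (S.card : ℝ)⁻¹ * (P α i S (flipAt i y) + Q α i S y)
          = (S.card : ℝ)⁻¹ * ((P α i S y - P α i S (flipAt i y))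
            - (Q α i S y - Q α i S (flipAt i y))) := by ring
      rw [hdiff1, hdiff2, abs_mul, abs_mul]
      refine mul_le_mul_of_nonneg_left ?_ (abs_nonneg _)
      exact abs_add_le_abs_sub (PQ_mul_nonpos h0 h2 i S y)
  have hdouble : ∀ q : (Fin n → Bool) → ℝ,
      (∑ y, Real.negMulLog (q y)) * 2
        = ∑ y, (Real.negMulLog (q y) + Real.negMulLog (q (flipAt i y))) := by
    intro q
    rw [Finset.sum_add_distrib, sum_flip i (fun y => Real.negMulLog (q y))]
    ring
  have := Finset.sum_le_sum (fun y (_ : y ∈ Finset.univ) => key y)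
  rw [← hdouble, ← hdouble] at this
  linarith
def cnt (x : Fin n → Bool) : ℕ := ∑ i, (if x i = true then 1 else 0)

lemma cnt_update (i : Fin n) (x : Fin n → Bool) (hx : x i = true) :
    cnt (Function.update x i false) + 1 = cnt x := by
  rw [cnt, cnt, ← Finset.add_sum_erase Finset.univ _ (Finset.mem_univ i),
      ← Finset.add_sum_erase Finset.univ _ (Finset.mem_univ i)]
  have he : (∑ j ∈ Finset.univ.erase i, if Function.update x i false j = true then 1 else 0)
      = ∑ j ∈ Finset.univ.erase i, if x j = true then 1 else 0 :=
    Finset.sum_congr rfl fun j hj => by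
      rw [Function.update_of_ne (Finset.ne_of_mem_erase hj)]
  rw [he, Function.update_self, hx]
  simp
  omega

def pot (S : Finset (Fin n → Bool)) : ℕ := ∑ x ∈ S, cnt x

lemma pot_shift_lt (i : Fin n) (S : Finset (Fin n → Bool)) (hT : (shiftT i S).Nonempty) :
    pot (shiftSet i S) < pot S := by
  have h1 : pot (shiftSet i S)
      = ∑ x ∈ S \ shiftT i S, cnt x + ∑ x ∈ shiftT i S, cnt (Function.update x i false) := by
    rw [pot, shiftSet, Finset.sum_union (image_disjoint i S),
      Finset.sum_image (update_injOn i S)]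
  have h2 : pot S = ∑ x ∈ S \ shiftT i S, cnt x + ∑ x ∈ shiftT i S, cnt x := by
    rw [pot, ← Finset.sum_sdiff (shiftT_subset i S)]
  rw [h1, h2]
  have h3 : ∑ x ∈ shiftT i S, cnt (Function.update x i false) < ∑ x ∈ shiftT i S, cnt x := by
    refine Finset.sum_lt_sum_of_nonempty hT fun x hx => ?_
    have hxi : x i = true := (mem_shiftT.mp hx).2.1
    have := cnt_update i x hxi
    omega
  omega

lemma mono_of_closed {S : Finset (Fin n → Bool)}
    (h : ∀ x ∈ S, ∀ i, x i = true → Function.update x i false ∈ S) : MonoSet S := by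
  have H : ∀ k : ℕ, ∀ x ∈ S, ∀ y : Fin n → Bool, (∀ i, y i ≤ x i) →
      (Finset.univ.filter fun i => ¬ y i = x i).card = k → y ∈ S := by
    intro k
    induction k with
    | zero =>
      intro x hx y hle hcard
      have hyx : y = x := by
        funext i
        by_contra hne
        have hm : i ∈ Finset.univ.filter fun i => ¬ y i = x i :=
          Finset.mem_filter.mpr ⟨Finset.mem_univ _, hne⟩
        rw [Finset.card_eq_zero] at hcard
        rw [hcard] at hm
        exact absurd hm (Finset.notMem_empty i)
      rwa [hyx]
    | succ k ih =>
      intro x hx y hle hcard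
      obtain ⟨i, hi⟩ : (Finset.univ.filter fun i => ¬ y i = x i).Nonempty :=
        Finset.card_pos.mp (by omega)
      have hyi : ¬ y i = x i := (Finset.mem_filter.mp hi).2
      have hb : x i = true ∧ y i = false := by
        have h1 := hle i
        cases hy2 : y i <;> cases hx2 : x i <;> rw [hy2, hx2] at h1 hyi <;>
          first
          | exact ⟨rfl, rfl⟩
          | exact absurd rfl hyi
          | exact absurd h1 (by decide)
      have hx' : Function.update x i false ∈ S := h x hx i hb.1
      have hle' : ∀ j, y j ≤ Function.update x i false j := by
        intro j
        by_cases hj : j = i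
        · subst hj; rw [Function.update_self, hb.2]
        · rw [Function.update_of_ne hj]; exact hle j
      have hcard' : (Finset.univ.filter fun j => ¬ y j = Function.update x i false j).card
          = k := by
        have hset : (Finset.univ.filter fun j => ¬ y j = Function.update x i false j)
            = (Finset.univ.filter fun j => ¬ y j = x j).erase i := by
          ext j
          simp only [Finset.mem_filter, Finset.mem_erase, Finset.mem_univ, true_and]
          by_cases hj : j = i
          · subst hj
            rw [Function.update_self, hb.2]
            simp
          · rw [Function.update_of_ne hj]
            simp [hj]
        rw [hset, Finset.card_erase_of_mem hi, hcard]
        rfl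
      exact ih (Function.update x i false) hx' y hle' hcard'
  intro x hx y hle
  exact H _ x hx y hle rfl

lemma exists_nonempty_shiftT {S : Finset (Fin n → Bool)} (h : ¬ MonoSet S) :
    ∃ i, (shiftT i S).Nonempty := by
  by_contra hc
  push_neg at hc
  apply h
  apply mono_of_closed
  intro x hx i hxi
  by_contra hni
  exact (Finset.not_nonempty_iff_eq_empty.mpr (hc i)) ⟨x, mem_shiftT.mpr ⟨hx, hxi, hni⟩⟩

lemma exists_mono_aux {α : ℝ} (h0 : 0 ≤ α) (h2 : α ≤ 1/2) :
    ∀ N (S : Finset (Fin n → Bool)), pot S ≤ N →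
      ∃ S' : Finset (Fin n → Bool), MonoSet S' ∧ S'.card = S.card ∧ ent (bscOut S' α) ≤ ent (bscOut S α) := by
  intro N
  induction N with
  | zero =>
    intro S hS
    by_cases hmono : MonoSet S
    · exact ⟨S, hmono, rfl, le_refl _⟩
    · obtain ⟨i, hT⟩ := exists_nonempty_shiftT hmono
      have := pot_shift_lt i S hT
      omega
  | succ N ih =>
    intro S hS
    by_cases hmono : MonoSet S
    · exact ⟨S, hmono, rfl, le_refl _⟩
    · obtain ⟨i, hT⟩ := exists_nonempty_shiftT hmono
      have hlt := pot_shift_lt i S hT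
      obtain ⟨S', hm1, hc1, he1⟩ := ih (shiftSet i S) (by omega)
      exact ⟨S', hm1, by rw [hc1, card_shiftSet],
        le_trans he1 (ent_shift_le h0 h2 i S)⟩

lemma exists_mono {α : ℝ} (h0 : 0 ≤ α) (h2 : α ≤ 1/2) (S : Finset (Fin n → Bool)) :
    ∃ S' : Finset (Fin n → Bool), MonoSet S' ∧ S'.card = S.card ∧ ent (bscOut S' α) ≤ ent (bscOut S α) :=
  exists_mono_aux h0 h2 (pot S) S le_rfl

end MonoShift

/-- Sufficiency of monotone sets: the minimum in `H_m^n(α)` is attained over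
monotone sets. -/
theorem monotone_sets_suffice (n m : ℕ) (hm : 1 ≤ m) (hm' : m ≤ 2 ^ n)
    (α : ℝ) (hα : α ∈ Set.Icc (0:ℝ) (1/2)) :
    Hmn n m α = sInf {h : ℝ | ∃ S : Finset (Fin n → Bool),
      S.card = m ∧ MonoSet S ∧ h = ent (bscOut S α)} := by
  obtain ⟨h0, h2⟩ := hα
  have hBA : {h : ℝ | ∃ S : Finset (Fin n → Bool), S.card = m ∧ MonoSet S ∧ h = ent (bscOut S α)}
      ⊆ {h : ℝ | ∃ S : Finset (Fin n → Bool), S.card = m ∧ h = ent (bscOut S α)} := by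
    rintro h ⟨S, hc, _, he⟩
    exact ⟨S, hc, he⟩
  have hAfin : {h : ℝ | ∃ S : Finset (Fin n → Bool), S.card = m ∧ h = ent (bscOut S α)}.Finite := by
    refine Set.Finite.subset (Set.finite_range
      (fun S : Finset (Fin n → Bool) => ent (bscOut S α))) ?_
    rintro h ⟨S, _, he⟩
    exact ⟨S, he.symm⟩
  have hAbdd : BddBelow {h : ℝ | ∃ S : Finset (Fin n → Bool), S.card = m ∧ h = ent (bscOut S α)} :=
    hAfin.bddBelow
  have hBbdd : BddBelow {h : ℝ | ∃ S : Finset (Fin n → Bool),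
      S.card = m ∧ MonoSet S ∧ h = ent (bscOut S α)} :=
    (hAfin.subset hBA).bddBelow
  obtain ⟨S0, -, hS0⟩ := Finset.exists_subset_card_eq (s := (Finset.univ : Finset (Fin n → Bool))) (n := m)
    (by simpa [Fintype.card_fun] using hm')
  obtain ⟨S1, hm1, hc1, -⟩ := MonoShift.exists_mono h0 h2 S0
  have hAne : {h : ℝ | ∃ S : Finset (Fin n → Bool), S.card = m ∧ h = ent (bscOut S α)}.Nonempty :=
    ⟨_, S0, hS0, rfl⟩
  have hBne : {h : ℝ | ∃ S : Finset (Fin n → Bool),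
      S.card = m ∧ MonoSet S ∧ h = ent (bscOut S α)}.Nonempty :=
    ⟨_, S1, by rw [hc1, hS0], hm1, rfl⟩
  rw [Hmn]
  apply le_antisymm
  · exact csInf_le_csInf hAbdd hBne hBA
  · refine le_csInf hAne ?_
    rintro h ⟨S, hSc, rfl⟩
    obtain ⟨S', hS'm, hS'c, hS'e⟩ := MonoShift.exists_mono h0 h2 S
    exact le_trans (csInf_le hBbdd ⟨S', by rw [hS'c, hSc], hS'm, rfl⟩) hS'e
end

section
/- For every integer m with 2 < m < 2^n and all α ∈ [0,1/2]: ((m−2)/(2m−2))·H_1^n(α) + (m/(2m−2))·H_m^n(α) ≥ H_2^n(α). -/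
open Real Finset

noncomputable def entN {Ω : Type*} [Fintype Ω] (p : Ω → ℝ) : ℝ :=
  ∑ x, Real.negMulLog (p x)

lemma ent_eq_entN {Ω : Type*} [Fintype Ω] (p : Ω → ℝ) : ent p = entN p / Real.log 2 := by
  unfold ent entN
  rw [Finset.sum_div]
  refine Finset.sum_congr rfl fun x _ => ?_
  rw [Real.logb, Real.negMulLog]
  ring

/-- generalized product kernel -/
noncomputable def qd {ι : Type} [Fintype ι] (α : ℝ) (x : ι → Bool) : (ι → Bool) → ℝ :=
  fun y => ∏ i, (if y i = x i then 1 - α else α)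

noncomputable def muS {ι : Type} [Fintype ι] (S : Finset (ι → Bool)) (α : ℝ) : (ι → Bool) → ℝ :=
  fun y => (S.card : ℝ)⁻¹ * ∑ x ∈ S, qd α x y

lemma qd_nonneg {ι : Type} [Fintype ι] {α : ℝ} (h0 : 0 ≤ α) (h1 : α ≤ 1/2) (x y : ι → Bool) :
    0 ≤ qd α x y := by
  refine Finset.prod_nonneg fun i _ => ?_
  split <;> linarith

lemma qd_le_one {ι : Type} [Fintype ι] {α : ℝ} (h0 : 0 ≤ α) (h1 : α ≤ 1/2) (x y : ι → Bool) :
    qd α x y ≤ 1 := by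
  refine Finset.prod_le_one (fun i _ => ?_) (fun i _ => ?_) <;> split <;> linarith

lemma sum_bool_ite {α : ℝ} (u : Bool) :
    ∑ s : Bool, (if s = u then 1 - α else α) = 1 := by
  cases u <;> simp [Fintype.sum_bool]

lemma qd_sum {ι : Type} [Fintype ι] [DecidableEq ι] (α : ℝ) (x : ι → Bool) :
    ∑ y, qd α x y = 1 := by
  classical
  unfold qd
  rw [← Fintype.piFinset_univ, ← Finset.prod_univ_sum (fun _ => (Finset.univ : Finset Bool))
    (fun i b => if b = x i then 1 - α else α)]
  rw [Finset.prod_eq_one]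
  intro i _
  exact sum_bool_ite (x i)

lemma muS_nonneg {ι : Type} [Fintype ι] {α : ℝ} (h0 : 0 ≤ α) (h1 : α ≤ 1/2)
    (S : Finset (ι → Bool)) (y : ι → Bool) : 0 ≤ muS S α y := by
  unfold muS
  exact mul_nonneg (by positivity) (Finset.sum_nonneg fun x _ => qd_nonneg h0 h1 x y)

lemma muS_le_one {ι : Type} [Fintype ι] {α : ℝ} (h0 : 0 ≤ α) (h1 : α ≤ 1/2)
    (S : Finset (ι → Bool)) (y : ι → Bool) : muS S α y ≤ 1 := by
  unfold muS
  rcases Nat.eq_zero_or_pos S.card with h | h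
  · simp [h]
  · have hc : (0:ℝ) < S.card := by exact_mod_cast h
    rw [inv_mul_le_iff₀ hc, mul_one]
    calc ∑ x ∈ S, qd α x y ≤ ∑ _x ∈ S, (1:ℝ) :=
          Finset.sum_le_sum fun x _ => qd_le_one h0 h1 x y
      _ = S.card := by simp

lemma muS_sum {ι : Type} [Fintype ι] [DecidableEq ι] {α : ℝ} (S : Finset (ι → Bool)) (hS : S.Nonempty) :
    ∑ y, muS S α y = 1 := by
  unfold muS
  rw [← Finset.mul_sum, Finset.sum_comm]
  have : ∑ x ∈ S, ∑ y, qd α x y = S.card := by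
    rw [Finset.sum_congr rfl fun x _ => qd_sum α x]
    simp
  rw [this]
  have hc : (0:ℝ) < S.card := by exact_mod_cast hS.card_pos
  field_simp

lemma entN_nonneg {Ω : Type*} [Fintype Ω] {p : Ω → ℝ} (h0 : ∀ x, 0 ≤ p x) (h1 : ∀ x, p x ≤ 1) :
    0 ≤ entN p :=
  Finset.sum_nonneg fun x _ => Real.negMulLog_nonneg (h0 x) (h1 x)


lemma ent_slice {γ : Type*} [Fintype γ] (f : γ → ℝ) (hf : ∀ y, 0 ≤ f y) (M : ℝ)
    (hM : M = ∑ y, f y) :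
    ∑ y, Real.negMulLog (f y) =
      Real.negMulLog M + M * (∑ y, Real.negMulLog (f y / M)) := by
  rcases eq_or_ne M 0 with h | h
  · have hz : ∀ y ∈ Finset.univ, f y = 0 :=
      (Finset.sum_eq_zero_iff_of_nonneg (fun y _ => hf y)).1 (hM.symm.trans h)
    rw [h]
    simp only [Real.negMulLog_zero, zero_mul, add_zero]
    exact Finset.sum_eq_zero fun y hy => by rw [hz y hy, Real.negMulLog_zero]
  · have hM0 : 0 < M := lt_of_le_of_ne (hM ▸ Finset.sum_nonneg fun y _ => hf y) (Ne.symm h)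
    have key : ∀ y, Real.negMulLog (f y) =
        (f y / M) * Real.negMulLog M + M * Real.negMulLog (f y / M) := by
      intro y
      have : f y = M * (f y / M) := by field_simp
      nth_rewrite 1 [this]
      rw [Real.negMulLog_mul]
    rw [Finset.sum_congr rfl fun y _ => key y, Finset.sum_add_distrib]
    congr 1
    · rw [← Finset.sum_mul, ← Finset.sum_div, ← hM]
      field_simp
    · rw [Finset.mul_sum]

lemma entN_add_mix {γ : Type*} [Fintype γ] (p q : γ → ℝ) (hp : ∀ y, 0 ≤ p y)
    (hq : ∀ y, 0 ≤ q y) {t : ℝ} (ht : 0 ≤ t) (ht1 : t ≤ 1) :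
    t * (∑ y, Real.negMulLog (p y)) + (1 - t) * (∑ y, Real.negMulLog (q y)) ≤
      ∑ y, Real.negMulLog (t * p y + (1 - t) * q y) := by
  rw [Finset.mul_sum, Finset.mul_sum, ← Finset.sum_add_distrib]
  refine Finset.sum_le_sum fun y _ => ?_
  have := Real.concaveOn_negMulLog.2 (Set.mem_Ici.2 (hp y)) (Set.mem_Ici.2 (hq y))
    ht (by linarith : (0:ℝ) ≤ 1 - t) (by ring : t + (1 - t) = 1)
  simpa [smul_eq_mul] using this

/-- key scalar inequality from concavity of binary entropy -/
lemma scalar_ineq {α t : ℝ} (hα0 : 0 ≤ α) (hα1 : α ≤ 1/2) (ht0 : 0 ≤ t) (ht1 : t ≤ 1/2) :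
    2 * t * Real.log 2 + (1 - 2*t) * Real.binEntropy α ≤
      Real.binEntropy (α + t * (1 - 2*α)) := by
  have h12 : (2:ℝ)⁻¹ ∈ Set.Icc (0:ℝ) 1 := by norm_num
  have hαm : α ∈ Set.Icc (0:ℝ) 1 := ⟨hα0, by linarith⟩
  have := Real.strictConcave_binEntropy.concaveOn.2 hαm h12
    (by linarith : (0:ℝ) ≤ 1 - 2*t) (by linarith : (0:ℝ) ≤ 2*t)
    (by ring : (1 - 2*t) + 2*t = 1)
  rw [smul_eq_mul, smul_eq_mul, smul_eq_mul, smul_eq_mul, Real.binEntropy_two_inv] at this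
  have harg : (1 - 2*t) * α + 2*t * 2⁻¹ = α + t * (1 - 2*α) := by ring
  rw [harg] at this
  linarith

variable {ι : Type} [Fintype ι] [DecidableEq ι]

/-- restriction of a function to coordinates `≠ i` -/
def proj (i : ι) (x : ι → Bool) : {j // j ≠ i} → Bool := fun j => x j.1

noncomputable def wB (α : ℝ) (s u : Bool) : ℝ := if s = u then 1 - α else α

lemma splitAt_symm_apply_same (i : ι) (s : Bool) (y : {j // j ≠ i} → Bool) :
    (Equiv.funSplitAt i Bool).symm (s, y) i = s := by
  simp [Equiv.funSplitAt, Equiv.piSplitAt]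

lemma splitAt_symm_apply_ne (i : ι) (s : Bool) (y : {j // j ≠ i} → Bool) (j : {j // j ≠ i}) :
    (Equiv.funSplitAt i Bool).symm (s, y) j.1 = y j := by
  simp [Equiv.funSplitAt, Equiv.piSplitAt, j.2]

lemma qd_split (i : ι) (α : ℝ) (x : ι → Bool) (s : Bool) (y : {j // j ≠ i} → Bool) :
    qd α x ((Equiv.funSplitAt i Bool).symm (s, y)) = wB α s (x i) * qd α (proj i x) y := by
  unfold qd wB proj
  rw [← Finset.mul_prod_erase Finset.univ _ (Finset.mem_univ i)]
  congr 1
  · rw [splitAt_symm_apply_same]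
  · rw [Finset.prod_subtype (Finset.univ.erase i) (p := fun j => j ≠ i) (fun j => by simp)
      (fun j => if (Equiv.funSplitAt i Bool).symm (s, y) j = x j then 1 - α else α)]
    exact Finset.prod_congr rfl fun j _ => by rw [splitAt_symm_apply_ne]

/-- the sub-population with `x i = s` -/
def flt (i : ι) (S : Finset (ι → Bool)) (s : Bool) : Finset (ι → Bool) :=
  S.filter (fun x => x i = s)

lemma filter_not_eq (i : ι) (S : Finset (ι → Bool)) :
    S.filter (fun x => ¬ x i = false) = flt i S true := by
  unfold flt; ext x; simp

/-- the projection of that sub-population -/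
noncomputable def Tpr (i : ι) (S : Finset (ι → Bool)) (s : Bool) :
    Finset ({j // j ≠ i} → Bool) :=
  (flt i S s).image (proj i)

lemma Tpr_card (i : ι) (S : Finset (ι → Bool)) (s : Bool) :
    (Tpr i S s).card = (flt i S s).card := by
  apply Finset.card_image_of_injOn
  intro x hx y hy hxy
  have hxs : x i = s := (Finset.mem_filter.1 hx).2
  have hys : y i = s := (Finset.mem_filter.1 hy).2
  funext j
  by_cases h : j = i
  · rw [h, hxs, hys]
  · exact congrFun hxy ⟨j, h⟩

lemma flt_card_add (i : ι) (S : Finset (ι → Bool)) :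
    (flt i S false).card + (flt i S true).card = S.card := by
  have h := Finset.card_filter_add_card_filter_not (s := S)
    (p := fun x => x i = false)
  rw [filter_not_eq] at h
  exact h

lemma sum_qd_eq {i : ι} (α : ℝ) (T : Finset ({j // j ≠ i} → Bool)) (y : {j // j ≠ i} → Bool) :
    ∑ x ∈ T, qd α x y = (T.card : ℝ) * muS T α y := by
  unfold muS
  rcases Finset.eq_empty_or_nonempty T with h | h
  · simp [h]
  · have hc : (0:ℝ) < T.card := by exact_mod_cast h.card_pos
    field_simp

lemma P_formula (i : ι) (S : Finset (ι → Bool)) (α : ℝ) (s : Bool) (y : {j // j ≠ i} → Bool) :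
    muS S α ((Equiv.funSplitAt i Bool).symm (s, y)) =
      (S.card : ℝ)⁻¹ * (((flt i S false).card : ℝ) * wB α s false * muS (Tpr i S false) α y
        + ((flt i S true).card : ℝ) * wB α s true * muS (Tpr i S true) α y) := by
  have h1 : ∀ s' : Bool, ∑ x ∈ flt i S s', wB α s (x i) * qd α (proj i x) y
      = ((flt i S s').card : ℝ) * wB α s s' * muS (Tpr i S s') α y := by
    intro s'
    have hc : ∀ x ∈ flt i S s', wB α s (x i) * qd α (proj i x) y
        = wB α s s' * qd α (proj i x) y := by
      intro x hx
      rw [(Finset.mem_filter.1 hx).2]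
    rw [Finset.sum_congr rfl hc, ← Finset.mul_sum]
    have himg : ∑ x ∈ flt i S s', qd α (proj i x) y = ∑ x' ∈ Tpr i S s', qd α x' y := by
      unfold Tpr
      rw [Finset.sum_image]
      intro x hx x' hx' hxy
      have hxs : x i = s' := (Finset.mem_filter.1 hx).2
      have hys : x' i = s' := (Finset.mem_filter.1 hx').2
      funext j
      by_cases h : j = i
      · rw [h, hxs, hys]
      · exact congrFun hxy ⟨j, h⟩
    rw [himg, sum_qd_eq, Tpr_card]
    ring
  have expand : muS S α ((Equiv.funSplitAt i Bool).symm (s, y))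
      = (S.card : ℝ)⁻¹ * ∑ x ∈ S, wB α s (x i) * qd α (proj i x) y := by
    unfold muS
    rw [Finset.sum_congr rfl fun x _ => qd_split i α x s y]
  rw [expand]
  congr 1
  rw [← Finset.sum_filter_add_sum_filter_not S (fun x => x i = false), filter_not_eq]
  show (∑ x ∈ flt i S false, wB α s (x i) * qd α (proj i x) y) + _ = _
  rw [h1 false, h1 true]


noncomputable def Wgt (i : ι) (S : Finset (ι → Bool)) (α : ℝ) (s : Bool) : ℝ :=
  (S.card : ℝ)⁻¹ * (((flt i S false).card : ℝ) * wB α s false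
    + ((flt i S true).card : ℝ) * wB α s true)

lemma wB_nonneg {α : ℝ} (h0 : 0 ≤ α) (h1 : α ≤ 1/2) (s u : Bool) : 0 ≤ wB α s u := by
  unfold wB; split <;> linarith

lemma Wgt_nonneg {α : ℝ} (h0 : 0 ≤ α) (h1 : α ≤ 1/2) (i : ι) (S : Finset (ι → Bool)) (s : Bool) :
    0 ≤ Wgt i S α s := by
  unfold Wgt
  have := wB_nonneg h0 h1 s false
  have := wB_nonneg h0 h1 s true
  positivity

lemma sum_wB (α : ℝ) (u : Bool) : wB α false u + wB α true u = 1 := by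
  unfold wB; cases u <;> simp

lemma Wgt_sum {α : ℝ} (i : ι) (S : Finset (ι → Bool)) (hS : S.Nonempty) :
    Wgt i S α false + Wgt i S α true = 1 := by
  unfold Wgt
  rw [← mul_add]
  have h : ((flt i S false).card : ℝ) * wB α false false + ((flt i S true).card : ℝ) * wB α false true
      + (((flt i S false).card : ℝ) * wB α true false + ((flt i S true).card : ℝ) * wB α true true)
      = ((flt i S false).card : ℝ) * (wB α false false + wB α true false)
        + ((flt i S true).card : ℝ) * (wB α false true + wB α true true) := by ring
  rw [h, sum_wB, sum_wB, mul_one, mul_one]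
  have hcard : ((flt i S false).card : ℝ) + ((flt i S true).card : ℝ) = (S.card : ℝ) := by
    exact_mod_cast congrArg (Nat.cast (R := ℝ)) (flt_card_add i S)
  rw [hcard]
  have hc : (0:ℝ) < S.card := by exact_mod_cast hS.card_pos
  field_simp

/-- the weight of slice `s` is the total mass of that slice -/
lemma Wgt_eq_sum {α : ℝ} (i : ι) (S : Finset (ι → Bool)) (s : Bool) :
    Wgt i S α s = ∑ y : {j // j ≠ i} → Bool, muS S α ((Equiv.funSplitAt i Bool).symm (s, y)) := by
  rw [Finset.sum_congr rfl fun y _ => P_formula i S α s y, ← Finset.mul_sum]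
  unfold Wgt
  congr 1
  rw [Finset.sum_add_distrib, ← Finset.mul_sum, ← Finset.mul_sum]
  have key : ∀ s' : Bool, ((flt i S s').card : ℝ) * wB α s s' *
      (∑ y : {j // j ≠ i} → Bool, muS (Tpr i S s') α y) = ((flt i S s').card : ℝ) * wB α s s' := by
    intro s'
    rcases Finset.eq_empty_or_nonempty (flt i S s') with h | h
    · simp [h]
    · have : (Tpr i S s').Nonempty := h.image _
      rw [muS_sum _ this, mul_one]
  rw [key false, key true]

/-- Chain rule decomposition of the entropy of `muS` along coordinate `i`. -/
lemma decomp_eq {α : ℝ} (h0 : 0 ≤ α) (h1 : α ≤ 1/2) (i : ι) (S : Finset (ι → Bool)) :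
    entN (muS S α) = ∑ s : Bool, (Real.negMulLog (Wgt i S α s)
      + Wgt i S α s * ∑ y : {j // j ≠ i} → Bool,
          Real.negMulLog (muS S α ((Equiv.funSplitAt i Bool).symm (s, y)) / Wgt i S α s)) := by
  have h := Equiv.sum_comp (Equiv.funSplitAt i Bool).symm
    (fun z => Real.negMulLog (muS S α z))
  unfold entN
  rw [← h, Fintype.sum_prod_type]
  exact Finset.sum_congr rfl fun s _ => ent_slice _ (fun y => muS_nonneg h0 h1 S _) _
    (Wgt_eq_sum i S s)


lemma mix_bound {γ : Type*} [Fintype γ] (ν₀ ν₁ : γ → ℝ) (hν₀ : ∀ y, 0 ≤ ν₀ y)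
    (hν₁ : ∀ y, 0 ≤ ν₁ y) {c₀ c₁ : ℝ} (hc₀ : 0 ≤ c₀) (hc₁ : 0 ≤ c₁) :
    c₀ * entN ν₀ + c₁ * entN ν₁ ≤
      (c₀ + c₁) * ∑ y, Real.negMulLog ((c₀ * ν₀ y + c₁ * ν₁ y) / (c₀ + c₁)) := by
  rcases eq_or_lt_of_le (add_nonneg hc₀ hc₁) with h | h
  · have h0 : c₀ = 0 := by linarith
    have h1 : c₁ = 0 := by linarith
    simp [h0, h1]
  · set W := c₀ + c₁ with hW
    have ht0 : 0 ≤ c₀ / W := div_nonneg hc₀ h.le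
    have ht1 : c₀ / W ≤ 1 := by rw [div_le_one h]; linarith
    have key := entN_add_mix ν₀ ν₁ hν₀ hν₁ ht0 ht1
    have h1t : 1 - c₀ / W = c₁ / W := by
      rw [eq_div_iff h.ne', sub_mul, div_mul_cancel₀ _ h.ne']
      linarith [hW]
    have harg : ∀ y, c₀ / W * ν₀ y + (1 - c₀ / W) * ν₁ y = (c₀ * ν₀ y + c₁ * ν₁ y) / W := by
      intro y
      rw [h1t, div_mul_eq_mul_div, div_mul_eq_mul_div, ← add_div]
    rw [Finset.sum_congr rfl fun y _ => congrArg Real.negMulLog (harg y)] at key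
    rw [h1t] at key
    have := mul_le_mul_of_nonneg_left key h.le
    unfold entN
    calc c₀ * (∑ y, Real.negMulLog (ν₀ y)) + c₁ * (∑ y, Real.negMulLog (ν₁ y))
        = W * (c₀ / W * (∑ y, Real.negMulLog (ν₀ y)) + c₁ / W * (∑ y, Real.negMulLog (ν₁ y))) := by
          field_simp
      _ ≤ W * ∑ y, Real.negMulLog ((c₀ * ν₀ y + c₁ * ν₁ y) / W) := this

/-- The master inequality: entropy decomposes into marginal entropy plus at least the
convex combination of the entropies of the two projected sub-populations. -/
lemma decomp_bound {α : ℝ} (h0 : 0 ≤ α) (h1 : α ≤ 1/2) (i : ι) (S : Finset (ι → Bool))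
    (hS : S.Nonempty) :
    Real.binEntropy (Wgt i S α true)
      + (((flt i S false).card : ℝ) / S.card) * entN (muS (Tpr i S false) α)
      + (((flt i S true).card : ℝ) / S.card) * entN (muS (Tpr i S true) α)
      ≤ entN (muS S α) := by
  rw [decomp_eq h0 h1 i S]
  rw [Fintype.sum_bool]
  -- marginal part
  have hmarg : Real.negMulLog (Wgt i S α true) + Real.negMulLog (Wgt i S α false)
      = Real.binEntropy (Wgt i S α true) := by
    have hWf : Wgt i S α false = 1 - Wgt i S α true := by
      have := Wgt_sum (α := α) i S hS; linarith
    rw [hWf, Real.binEntropy_eq_negMulLog_add_negMulLog_one_sub]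
  -- conditional part, per slice
  have hcond : ∀ s : Bool,
      (S.card : ℝ)⁻¹ * (((flt i S false).card : ℝ) * wB α s false) * entN (muS (Tpr i S false) α)
      + (S.card : ℝ)⁻¹ * (((flt i S true).card : ℝ) * wB α s true) * entN (muS (Tpr i S true) α)
      ≤ Wgt i S α s * ∑ y : {j // j ≠ i} → Bool,
          Real.negMulLog (muS S α ((Equiv.funSplitAt i Bool).symm (s, y)) / Wgt i S α s) := by
    intro s
    have hrw : ∀ y : {j // j ≠ i} → Bool,
        muS S α ((Equiv.funSplitAt i Bool).symm (s, y)) / Wgt i S α s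
        = ((S.card : ℝ)⁻¹ * (((flt i S false).card : ℝ) * wB α s false) * muS (Tpr i S false) α y
          + (S.card : ℝ)⁻¹ * (((flt i S true).card : ℝ) * wB α s true) * muS (Tpr i S true) α y)
          / ((S.card : ℝ)⁻¹ * (((flt i S false).card : ℝ) * wB α s false)
            + (S.card : ℝ)⁻¹ * (((flt i S true).card : ℝ) * wB α s true)) := by
      intro y
      rw [P_formula i S α s y]
      congr 1
      · ring
      · unfold Wgt; ring
    have hWgt : Wgt i S α s = (S.card : ℝ)⁻¹ * (((flt i S false).card : ℝ) * wB α s false)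
        + (S.card : ℝ)⁻¹ * (((flt i S true).card : ℝ) * wB α s true) := by
      unfold Wgt; ring
    rw [Finset.sum_congr rfl fun y _ => congrArg Real.negMulLog (hrw y)]
    rw [hWgt]
    exact mix_bound _ _ (fun y => muS_nonneg h0 h1 _ y) (fun y => muS_nonneg h0 h1 _ y)
      (mul_nonneg (by positivity) (mul_nonneg (Nat.cast_nonneg _) (wB_nonneg h0 h1 s false)))
      (mul_nonneg (by positivity) (mul_nonneg (Nat.cast_nonneg _) (wB_nonneg h0 h1 s true)))
  have hs0 : (S.card : ℝ)⁻¹ * (((flt i S false).card : ℝ) * wB α false false)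
      + (S.card : ℝ)⁻¹ * (((flt i S false).card : ℝ) * wB α true false)
      = ((flt i S false).card : ℝ) / S.card := by
    have h := sum_wB α false
    rw [div_eq_mul_inv]
    linear_combination ((S.card : ℝ)⁻¹ * ((flt i S false).card : ℝ)) * h
  have hs1 : (S.card : ℝ)⁻¹ * (((flt i S true).card : ℝ) * wB α false true)
      + (S.card : ℝ)⁻¹ * (((flt i S true).card : ℝ) * wB α true true)
      = ((flt i S true).card : ℝ) / S.card := by
    have h := sum_wB α true
    rw [div_eq_mul_inv]
    linear_combination ((S.card : ℝ)⁻¹ * ((flt i S true).card : ℝ)) * h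
  have hf := hcond false
  have ht := hcond true
  have hp0 : (((flt i S false).card : ℝ) / S.card) * entN (muS (Tpr i S false) α)
      = (S.card : ℝ)⁻¹ * (((flt i S false).card : ℝ) * wB α false false)
          * entN (muS (Tpr i S false) α)
        + (S.card : ℝ)⁻¹ * (((flt i S false).card : ℝ) * wB α true false)
          * entN (muS (Tpr i S false) α) := by
    rw [← hs0]; ring
  have hp1 : (((flt i S true).card : ℝ) / S.card) * entN (muS (Tpr i S true) α)
      = (S.card : ℝ)⁻¹ * (((flt i S true).card : ℝ) * wB α false true)
          * entN (muS (Tpr i S true) α)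
        + (S.card : ℝ)⁻¹ * (((flt i S true).card : ℝ) * wB α true true)
          * entN (muS (Tpr i S true) α) := by
    rw [← hs1]; ring
  linarith

lemma card_ne {ι : Type} [Fintype ι] [DecidableEq ι] (i : ι) :
    Fintype.card {j // j ≠ i} = Fintype.card ι - 1 := by
  have h := Fintype.card_subtype_compl (fun j : ι => j = i)
  rw [Fintype.card_subtype_eq] at h
  exact h

lemma marg_lb {α a b m : ℝ} (h0 : 0 ≤ α) (h1 : α ≤ 1/2) (ha : 1 ≤ a) (hb : 1 ≤ b)
    (hm : m = a + b) :
    2/m * Real.log 2 + (1 - 2/m) * Real.binEntropy α ≤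
      Real.binEntropy (α + (b/m) * (1 - 2*α)) := by
  subst hm
  have hm0 : (0:ℝ) < a + b := by linarith
  have hBL := Real.binEntropy_le_log_two (p := α)
  have hsum : a/(a+b) + b/(a+b) = 1 := by field_simp
  rcases le_or_gt (b/(a+b)) (1/2) with hbt | hbt
  · have hs := scalar_ineq h0 h1 (by positivity : (0:ℝ) ≤ b/(a+b)) hbt
    have h2 : 0 ≤ (b-1)/(a+b) * (Real.log 2 - Real.binEntropy α) :=
      mul_nonneg (div_nonneg (by linarith) hm0.le) (by linarith)
    have hexp : (b-1)/(a+b) * (Real.log 2 - Real.binEntropy α)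
        = (2*(b/(a+b))*Real.log 2 - 2*(b/(a+b))*Real.binEntropy α
          - (2/(a+b)*Real.log 2 - 2/(a+b)*Real.binEntropy α))/2 := by
      field_simp
    rw [hexp] at h2
    linarith
  · have hat : a/(a+b) ≤ 1/2 := by linarith
    have harg : α + (b/(a+b)) * (1 - 2*α) = 1 - (α + (a/(a+b)) * (1 - 2*α)) := by
      field_simp
      ring
    rw [harg, Real.binEntropy_one_sub]
    have hs := scalar_ineq h0 h1 (by positivity : (0:ℝ) ≤ a/(a+b)) hat
    have h2 : 0 ≤ (a-1)/(a+b) * (Real.log 2 - Real.binEntropy α) :=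
      mul_nonneg (div_nonneg (by linarith) hm0.le) (by linarith)
    have hexp : (a-1)/(a+b) * (Real.log 2 - Real.binEntropy α)
        = (2*(a/(a+b))*Real.log 2 - 2*(a/(a+b))*Real.binEntropy α
          - (2/(a+b)*Real.log 2 - 2/(a+b)*Real.binEntropy α))/2 := by
      field_simp
    rw [hexp] at h2
    linarith

lemma coeff_identity {L B a b m N : ℝ} (ha : 1 ≤ a) (hb : 1 ≤ b) (hm : m = a + b) :
    (2 - 2/m)*L + ((N+1) - (2 - 2/m))*B =
      2/m*L + (1 - 2/m)*B + a/m*((2 - 2/a)*L + (N - (2 - 2/a))*B)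
        + b/m*((2 - 2/b)*L + (N - (2 - 2/b))*B) := by
  subst hm
  have ha0 : a ≠ 0 := by linarith
  have hb0 : b ≠ 0 := by linarith
  have hab : a + b ≠ 0 := by positivity
  field_simp
  ring

lemma main_lb (N : ℕ) : ∀ (ι : Type) [Fintype ι] [DecidableEq ι], Fintype.card ι = N →
    ∀ {α : ℝ}, 0 ≤ α → α ≤ 1/2 → ∀ S : Finset (ι → Bool), S.Nonempty →
    (2 - 2/(S.card : ℝ)) * Real.log 2 + ((N : ℝ) - (2 - 2/(S.card : ℝ))) * Real.binEntropy α
      ≤ entN (muS S α) := by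
  induction N with
  | zero =>
    intro ι _ _ hcard α h0 h1 S hS
    have hcard1 : Fintype.card (ι → Bool) = 1 := by
      rw [Fintype.card_fun, hcard, pow_zero]
    have hS1 : S.card = 1 := le_antisymm (by
      calc S.card ≤ Fintype.card (ι → Bool) := Finset.card_le_univ S
        _ = 1 := hcard1) hS.card_pos
    rw [hS1]
    norm_num
    exact entN_nonneg (fun y => muS_nonneg h0 h1 S y) (fun y => muS_le_one h0 h1 S y)
  | succ N ih =>
    intro ι _ _ hcard α h0 h1 S hS
    have hpos : 0 < Fintype.card ι := by omega
    have hcard' : ∀ i : ι, Fintype.card {j // j ≠ i} = N := by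
      intro i; rw [card_ne, hcard]; omega
    rcases eq_or_lt_of_le (show 1 ≤ S.card from hS.card_pos) with h1c | h2c
    · -- singleton case
      obtain ⟨x, rfl⟩ := Finset.card_eq_one.1 h1c.symm
      obtain ⟨i⟩ : Nonempty ι := Fintype.card_pos_iff.1 hpos
      have hD := decomp_bound h0 h1 i {x} (Finset.singleton_nonempty x)
      -- the two filters
      cases hxi : x i with
      | false =>
        have hff : flt i {x} false = {x} := by
          unfold flt; rw [Finset.filter_singleton, if_pos hxi]
        have hft : flt i {x} true = ∅ := by
          unfold flt; rw [Finset.filter_singleton, if_neg (by rw [hxi]; simp)]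
        have hW : Wgt i {x} α true = α := by
          unfold Wgt wB; rw [hff, hft]; simp
        have hT : Tpr i {x} false = {proj i x} := by
          unfold Tpr; rw [hff, Finset.image_singleton]
        have hI := ih {j // j ≠ i} (hcard' i) h0 h1 (Tpr i {x} false) (by
          rw [hT]; exact Finset.singleton_nonempty _)
        rw [hT, Finset.card_singleton] at hI
        norm_num at hI
        rw [hff, hft] at hD
        rw [hW, hT] at hD
        simp only [Finset.card_singleton, Finset.card_empty, Nat.cast_one, Nat.cast_zero,
          Nat.cast_ofNat, zero_div, zero_mul, add_zero, div_one, one_mul] at hD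
        rw [Finset.card_singleton]
        push_cast
        norm_num
        linarith
      | true =>
        have hff : flt i {x} false = ∅ := by
          unfold flt; rw [Finset.filter_singleton, if_neg (by rw [hxi]; simp)]
        have hft : flt i {x} true = {x} := by
          unfold flt; rw [Finset.filter_singleton, if_pos hxi]
        have hW : Wgt i {x} α true = 1 - α := by
          unfold Wgt wB; rw [hff, hft]; simp
        have hT : Tpr i {x} true = {proj i x} := by
          unfold Tpr; rw [hft, Finset.image_singleton]
        have hI := ih {j // j ≠ i} (hcard' i) h0 h1 (Tpr i {x} true) (by
          rw [hT]; exact Finset.singleton_nonempty _)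
        rw [hT, Finset.card_singleton] at hI
        norm_num at hI
        rw [hff, hft] at hD
        rw [hW, hT] at hD
        rw [Real.binEntropy_one_sub] at hD
        simp only [Finset.card_singleton, Finset.card_empty, Nat.cast_one, Nat.cast_zero,
          Nat.cast_ofNat, zero_div, zero_mul, add_zero, div_one, one_mul] at hD
        rw [Finset.card_singleton]
        push_cast
        norm_num
        linarith
    · -- |S| ≥ 2 : find a splitting coordinate
      obtain ⟨x, hx, y, hy, hxy⟩ := Finset.one_lt_card.1 h2c
      have hex : ∃ i, x i ≠ y i := by
        by_contra hcon
        push_neg at hcon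
        exact hxy (funext hcon)
      obtain ⟨i, hne⟩ := hex
      have hf : (flt i S false).Nonempty := by
        cases hxi : x i with
        | false => exact ⟨x, Finset.mem_filter.2 ⟨hx, hxi⟩⟩
        | true =>
          refine ⟨y, Finset.mem_filter.2 ⟨hy, ?_⟩⟩
          cases hyi : y i with
          | false => rfl
          | true => exact absurd (hxi.trans hyi.symm) hne
      have ht : (flt i S true).Nonempty := by
        cases hxi : x i with
        | true => exact ⟨x, Finset.mem_filter.2 ⟨hx, hxi⟩⟩
        | false =>
          refine ⟨y, Finset.mem_filter.2 ⟨hy, ?_⟩⟩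
          cases hyi : y i with
          | true => rfl
          | false => exact absurd (hxi.trans hyi.symm) hne
      set a := (flt i S false).card with haa
      set b := (flt i S true).card with hbb
      have ha1 : 1 ≤ a := hf.card_pos
      have hb1 : 1 ≤ b := ht.card_pos
      have hab : a + b = S.card := flt_card_add i S
      have habR : ((a:ℝ)) + (b:ℝ) = (S.card : ℝ) := by exact_mod_cast hab
      have hmR : (S.card : ℝ) = (a:ℝ) + (b:ℝ) := habR.symm
      -- decomposition bound
      have hD := decomp_bound h0 h1 i S hS
      -- marginal value
      have hWval : Wgt i S α true = α + ((b:ℝ)/(S.card:ℝ)) * (1 - 2*α) := by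
        unfold Wgt wB
        simp only [reduceIte, Bool.true_eq_false, if_false]
        rw [hmR]
        have hm0 : (0:ℝ) < (a:ℝ) + (b:ℝ) := by
          have : (1:ℝ) ≤ (a:ℝ) := by exact_mod_cast ha1
          have : (1:ℝ) ≤ (b:ℝ) := by exact_mod_cast hb1
          linarith
        field_simp
        ring
      have hM := marg_lb h0 h1 (by exact_mod_cast ha1 : (1:ℝ) ≤ (a:ℝ))
        (by exact_mod_cast hb1 : (1:ℝ) ≤ (b:ℝ)) hmR
      rw [← hWval] at hM
      -- induction hypotheses for the two projections
      have hI0 := ih {j // j ≠ i} (hcard' i) h0 h1 (Tpr i S false) (hf.image _)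
      have hI1 := ih {j // j ≠ i} (hcard' i) h0 h1 (Tpr i S true) (ht.image _)
      rw [Tpr_card] at hI0 hI1
      -- multiply by nonneg coefficients
      have hc0 : (0:ℝ) ≤ (a:ℝ)/(S.card:ℝ) := by positivity
      have hc1 : (0:ℝ) ≤ (b:ℝ)/(S.card:ℝ) := by positivity
      have hJ0 := mul_le_mul_of_nonneg_left hI0 hc0
      have hJ1 := mul_le_mul_of_nonneg_left hI1 hc1
      -- final identity
      have hid := coeff_identity (L := Real.log 2) (B := Real.binEntropy α) (N := (N:ℝ))
        (by exact_mod_cast ha1) (by exact_mod_cast hb1) hmR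
      push_cast
      linarith

lemma sum_wB' (α : ℝ) (s : Bool) : wB α s false + wB α s true = 1 := by
  cases s <;> simp [wB]

lemma decomp_eq_const {α : ℝ} (h0 : 0 ≤ α) (h1 : α ≤ 1/2) (i : ι) (S : Finset (ι → Bool))
    (hS : S.Nonempty) (C : ℝ)
    (hcond : ∀ s : Bool, Wgt i S α s ≠ 0 →
      ∑ y : {j // j ≠ i} → Bool,
        Real.negMulLog (muS S α ((Equiv.funSplitAt i Bool).symm (s, y)) / Wgt i S α s) = C) :
    entN (muS S α) = (∑ s : Bool, Real.negMulLog (Wgt i S α s)) + C := by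
  rw [decomp_eq h0 h1 i S, Finset.sum_add_distrib]
  congr 1
  have : ∀ s : Bool, Wgt i S α s * ∑ y : {j // j ≠ i} → Bool,
      Real.negMulLog (muS S α ((Equiv.funSplitAt i Bool).symm (s, y)) / Wgt i S α s)
      = Wgt i S α s * C := by
    intro s
    rcases eq_or_ne (Wgt i S α s) 0 with h | h
    · rw [h, zero_mul, zero_mul]
    · rw [hcond s h]
  rw [Finset.sum_congr rfl fun s _ => this s, ← Finset.sum_mul, Fintype.sum_bool]
  rw [show Wgt i S α true + Wgt i S α false = 1 by linarith [Wgt_sum (α := α) i S hS], one_mul]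

lemma single_eq_aux (i : ι) {α : ℝ} (h0 : 0 ≤ α) (h1 : α ≤ 1/2) (x : ι → Bool)
    {C : ℝ} (hC : entN (muS {proj i x} α) = C) :
    entN (muS {x} α) = Real.binEntropy α + C := by
  cases hxi : x i with
  | false =>
    have hf : flt i {x} false = {x} := by
      unfold flt; rw [Finset.filter_singleton, if_pos hxi]
    have hft : flt i {x} true = ∅ := by
      unfold flt; rw [Finset.filter_singleton, if_neg (by simp [hxi])]
    have hT : Tpr i {x} false = {proj i x} := by
      unfold Tpr; rw [hf, Finset.image_singleton]
    have hTt : Tpr i {x} true = (∅ : Finset ({j // j ≠ i} → Bool)) := by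
      unfold Tpr; rw [hft, Finset.image_empty]
    have hWs : ∀ s : Bool, Wgt i {x} α s = wB α s false := by
      intro s; unfold Wgt; rw [hf, hft]; simp
    have hP : ∀ (s : Bool) (y : {j // j ≠ i} → Bool),
        muS {x} α ((Equiv.funSplitAt i Bool).symm (s, y))
          = wB α s false * muS {proj i x} α y := by
      intro s y
      rw [P_formula, hf, hft, hT]
      simp
    have hcondC : ∀ s : Bool, Wgt i {x} α s ≠ 0 →
        ∑ y : {j // j ≠ i} → Bool,
          Real.negMulLog (muS {x} α ((Equiv.funSplitAt i Bool).symm (s, y)) / Wgt i {x} α s)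
          = C := by
      intro s hs
      rw [hWs s] at hs
      have hq : ∀ y : {j // j ≠ i} → Bool,
          muS {x} α ((Equiv.funSplitAt i Bool).symm (s, y)) / Wgt i {x} α s
          = muS {proj i x} α y := by
        intro y
        rw [hP s y, hWs s, mul_div_cancel_left₀ _ hs]
      rw [Finset.sum_congr rfl fun y _ => by rw [hq y]]
      exact hC
    rw [decomp_eq_const h0 h1 i {x} (Finset.singleton_nonempty x) _ hcondC]
    rw [Fintype.sum_bool, hWs, hWs]
    have : wB α true false = α := by simp [wB]
    rw [this]
    have : wB α false false = 1 - α := by simp [wB]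
    rw [this]
    rw [Real.binEntropy_eq_negMulLog_add_negMulLog_one_sub]
  | true =>
    have hf : flt i {x} true = {x} := by
      unfold flt; rw [Finset.filter_singleton, if_pos hxi]
    have hft : flt i {x} false = ∅ := by
      unfold flt; rw [Finset.filter_singleton, if_neg (by simp [hxi])]
    have hT : Tpr i {x} true = {proj i x} := by
      unfold Tpr; rw [hf, Finset.image_singleton]
    have hTt : Tpr i {x} false = (∅ : Finset ({j // j ≠ i} → Bool)) := by
      unfold Tpr; rw [hft, Finset.image_empty]
    have hWs : ∀ s : Bool, Wgt i {x} α s = wB α s true := by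
      intro s; unfold Wgt; rw [hf, hft]; simp
    have hP : ∀ (s : Bool) (y : {j // j ≠ i} → Bool),
        muS {x} α ((Equiv.funSplitAt i Bool).symm (s, y))
          = wB α s true * muS {proj i x} α y := by
      intro s y
      rw [P_formula, hf, hft, hT]
      simp
    have hcondC : ∀ s : Bool, Wgt i {x} α s ≠ 0 →
        ∑ y : {j // j ≠ i} → Bool,
          Real.negMulLog (muS {x} α ((Equiv.funSplitAt i Bool).symm (s, y)) / Wgt i {x} α s)
          = C := by
      intro s hs
      rw [hWs s] at hs
      have hq : ∀ y : {j // j ≠ i} → Bool,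
          muS {x} α ((Equiv.funSplitAt i Bool).symm (s, y)) / Wgt i {x} α s
          = muS {proj i x} α y := by
        intro y
        rw [hP s y, hWs s, mul_div_cancel_left₀ _ hs]
      rw [Finset.sum_congr rfl fun y _ => by rw [hq y]]
      exact hC
    rw [decomp_eq_const h0 h1 i {x} (Finset.singleton_nonempty x) _ hcondC]
    rw [Fintype.sum_bool, hWs, hWs]
    have : wB α true true = 1 - α := by simp [wB]
    rw [this]
    have : wB α false true = α := by simp [wB]
    rw [this]
    rw [Real.binEntropy_eq_negMulLog_add_negMulLog_one_sub]
    ring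

lemma single_eq (N : ℕ) : ∀ (ι : Type) [Fintype ι] [DecidableEq ι], Fintype.card ι = N →
    ∀ {α : ℝ}, 0 ≤ α → α ≤ 1/2 → ∀ x : ι → Bool,
    entN (muS {x} α) = (N : ℝ) * Real.binEntropy α := by
  induction N with
  | zero =>
    intro ι _ _ hcard α h0 h1 x
    haveI : IsEmpty ι := Fintype.card_eq_zero_iff.1 hcard
    have hone : ∀ y, muS {x} α y = 1 := by
      intro y
      unfold muS qd
      simp [Finset.univ_eq_empty]
    unfold entN
    rw [Finset.sum_congr rfl fun y _ => by rw [hone y]]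
    simp
  | succ N ih =>
    intro ι _ _ hcard α h0 h1 x
    have hpos : 0 < Fintype.card ι := by omega
    obtain ⟨i⟩ : Nonempty ι := Fintype.card_pos_iff.1 hpos
    have hcard' : Fintype.card {j // j ≠ i} = N := by rw [card_ne, hcard]; omega
    rw [single_eq_aux i h0 h1 x (ih _ hcard' h0 h1 (proj i x))]
    push_cast
    ring

lemma pair_eq (i : ι) {α : ℝ} (h0 : 0 ≤ α) (h1 : α ≤ 1/2) (x x' : ι → Bool)
    (hxi : x i = false) (hx'i : x' i = true) (hproj : proj i x = proj i x') :
    entN (muS {x, x'} α)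
      = Real.log 2 + ((Fintype.card ι : ℝ) - 1) * Real.binEntropy α := by
  have hxx : x ≠ x' := fun h => by rw [h, hx'i] at hxi; exact Bool.noConfusion hxi
  have hcard2 : ({x, x'} : Finset (ι → Bool)).card = 2 := Finset.card_pair hxx
  have hf : flt i {x, x'} false = {x} := by
    unfold flt
    rw [Finset.filter_insert, if_pos hxi, Finset.filter_singleton, if_neg (by simp [hx'i])]
    rfl
  have hft : flt i {x, x'} true = {x'} := by
    unfold flt
    rw [Finset.filter_insert, if_neg (by simp [hxi]), Finset.filter_singleton, if_pos hx'i]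
  have hT : Tpr i {x, x'} false = {proj i x} := by
    unfold Tpr; rw [hf, Finset.image_singleton]
  have hTt : Tpr i {x, x'} true = {proj i x} := by
    unfold Tpr; rw [hft, Finset.image_singleton, hproj]
  have hWs : ∀ s : Bool, Wgt i {x, x'} α s = 2⁻¹ := by
    intro s
    unfold Wgt
    rw [hf, hft, hcard2]
    rw [Finset.card_singleton, Finset.card_singleton]
    push_cast
    rw [one_mul, one_mul, sum_wB']
    norm_num
  have hP : ∀ (s : Bool) (y : {j // j ≠ i} → Bool),
      muS {x, x'} α ((Equiv.funSplitAt i Bool).symm (s, y))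
        = 2⁻¹ * muS {proj i x} α y := by
    intro s y
    rw [P_formula, hf, hft, hT, hTt, hcard2]
    rw [Finset.card_singleton, Finset.card_singleton]
    push_cast
    linear_combination (2⁻¹ * muS {proj i x} α y) * sum_wB' α s
  have hN : entN (muS {proj i x} α)
      = ((Fintype.card ι : ℝ) - 1) * Real.binEntropy α := by
    have h1le : 1 ≤ Fintype.card ι := Fintype.card_pos_iff.2 ⟨i⟩
    have := single_eq (Fintype.card ι - 1) {j // j ≠ i} (card_ne i) h0 h1 (proj i x)
    rw [this]
    congr 1
    push_cast [Nat.cast_sub h1le]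
    ring
  have hcondC : ∀ s : Bool, Wgt i {x, x'} α s ≠ 0 →
      ∑ y : {j // j ≠ i} → Bool,
        Real.negMulLog (muS {x, x'} α ((Equiv.funSplitAt i Bool).symm (s, y)) / Wgt i {x, x'} α s)
        = ((Fintype.card ι : ℝ) - 1) * Real.binEntropy α := by
    intro s _
    have hq : ∀ y : {j // j ≠ i} → Bool,
        muS {x, x'} α ((Equiv.funSplitAt i Bool).symm (s, y)) / Wgt i {x, x'} α s
        = muS {proj i x} α y := by
      intro y
      rw [hP s y, hWs s, mul_div_cancel_left₀ _ (by norm_num : (2:ℝ)⁻¹ ≠ 0)]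
    rw [Finset.sum_congr rfl fun y _ => by rw [hq y]]
    exact hN
  rw [decomp_eq_const h0 h1 i {x, x'} (Finset.insert_nonempty _ _) _ hcondC]
  rw [Fintype.sum_bool, hWs, hWs]
  congr 1
  rw [Real.negMulLog, Real.log_inv]
  norm_num
  ring

lemma bscOut_eq_muS {n : ℕ} (S : Finset (Fin n → Bool)) (α : ℝ) :
    bscOut S α = muS S α := rfl

lemma ent_bscOut_nonneg {n : ℕ} {α : ℝ} (h0 : 0 ≤ α) (h1 : α ≤ 1/2)
    (S : Finset (Fin n → Bool)) : 0 ≤ ent (bscOut S α) := by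
  rw [bscOut_eq_muS, ent_eq_entN]
  exact div_nonneg (entN_nonneg (fun y => muS_nonneg h0 h1 S y)
    (fun y => muS_le_one h0 h1 S y)) (Real.log_nonneg one_le_two)

lemma exists_card_set (n k : ℕ) (hk : k ≤ 2^n) :
    ∃ S : Finset (Fin n → Bool), S.card = k := by
  have hcard : Fintype.card (Fin n → Bool) = 2^n := by
    rw [Fintype.card_fun, Fintype.card_bool, Fintype.card_fin]
  have : k ≤ (Finset.univ : Finset (Fin n → Bool)).card := by
    rw [Finset.card_univ, hcard]; exact hk
  obtain ⟨S, _, hS⟩ := Finset.exists_subset_card_eq this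
  exact ⟨S, hS⟩

lemma Hmn_le {n k : ℕ} {α : ℝ} (h0 : 0 ≤ α) (h1 : α ≤ 1/2)
    (S : Finset (Fin n → Bool)) (hS : S.card = k) : Hmn n k α ≤ ent (bscOut S α) := by
  apply csInf_le
  · refine ⟨0, fun h hh => ?_⟩
    obtain ⟨T, _, rfl⟩ := hh
    exact ent_bscOut_nonneg h0 h1 T
  · exact ⟨S, hS, rfl⟩

lemma le_Hmn {n k : ℕ} {α c : ℝ} (hk : k ≤ 2^n)
    (hlb : ∀ S : Finset (Fin n → Bool), S.card = k → c ≤ ent (bscOut S α)) :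
    c ≤ Hmn n k α := by
  obtain ⟨S, hS⟩ := exists_card_set n k hk
  refine le_csInf ⟨_, S, hS, rfl⟩ ?_
  rintro h ⟨T, hT, rfl⟩
  exact hlb T hT

lemma ent_lb (n : ℕ) {α : ℝ} (h0 : 0 ≤ α) (h1 : α ≤ 1/2)
    (S : Finset (Fin n → Bool)) (hS : S.Nonempty) :
    (2 - 2/(S.card:ℝ)) + ((n:ℝ) - (2 - 2/(S.card:ℝ))) * (Real.binEntropy α / Real.log 2)
      ≤ ent (bscOut S α) := by
  have hL : 0 < Real.log 2 := Real.log_pos one_lt_two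
  have h := main_lb n (Fin n) (Fintype.card_fin n) h0 h1 S hS
  rw [bscOut_eq_muS, ent_eq_entN]
  have h2 := (div_le_div_iff_of_pos_right hL).2 h
  refine le_trans (le_of_eq ?_) h2
  field_simp

lemma ent_pair_val (n : ℕ) (hn : 0 < n) {α : ℝ} (h0 : 0 ≤ α) (h1 : α ≤ 1/2) :
    ∃ S : Finset (Fin n → Bool), S.card = 2 ∧
      ent (bscOut S α) = 1 + ((n:ℝ) - 1) * (Real.binEntropy α / Real.log 2) := by
  have hL : 0 < Real.log 2 := Real.log_pos one_lt_two
  set i : Fin n := ⟨0, hn⟩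
  set x : Fin n → Bool := fun _ => false with hx
  set x' : Fin n → Bool := fun j => if j = i then true else false with hx'
  have hxi : x i = false := rfl
  have hx'i : x' i = true := if_pos rfl
  have hproj : proj i x = proj i x' := by
    funext j
    show false = if j.1 = i then true else false
    rw [if_neg j.2]
  have hxx : x ≠ x' := fun h => by
    have := congrFun h i
    rw [hxi, hx'i] at this
    exact Bool.noConfusion this
  refine ⟨{x, x'}, Finset.card_pair hxx, ?_⟩
  rw [bscOut_eq_muS, ent_eq_entN, pair_eq i h0 h1 x x' hxi hx'i hproj]
  rw [Fintype.card_fin]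
  field_simp

theorem key_convexity_bound (n m : ℕ) (hm : 2 < m) (hm' : m < 2 ^ n)
    (α : ℝ) (hα : α ∈ Set.Icc (0:ℝ) (1/2)) :
    Hmn n 2 α ≤ ((m : ℝ) - 2) / (2 * m - 2) * Hmn n 1 α +
      (m : ℝ) / (2 * m - 2) * Hmn n m α := by
  obtain ⟨h0, h1⟩ := hα
  have hn0 : 0 < n := by
    rcases Nat.eq_zero_or_pos n with h | h
    · subst h; simp at hm'; omega
    · exact h
  set hb : ℝ := Real.binEntropy α / Real.log 2 with hhb
  -- lower bound for H_1
  have hH1 : (n:ℝ) * hb ≤ Hmn n 1 α := by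
    refine le_Hmn (Nat.one_le_two_pow) ?_
    intro S hS
    have h := ent_lb n h0 h1 S (Finset.card_pos.1 (by rw [hS]; norm_num))
    rw [hS] at h
    refine le_trans (le_of_eq ?_) h
    push_cast
    ring
  -- lower bound for H_m
  have hHm : (2 - 2/(m:ℝ)) + ((n:ℝ) - (2 - 2/(m:ℝ))) * hb ≤ Hmn n m α := by
    refine le_Hmn hm'.le ?_
    intro S hS
    have h := ent_lb n h0 h1 S (Finset.card_pos.1 (by rw [hS]; omega))
    rw [hS] at h
    exact h
  -- upper bound for H_2
  have hH2 : Hmn n 2 α ≤ 1 + ((n:ℝ) - 1) * hb := by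
    obtain ⟨S, hS2, hSval⟩ := ent_pair_val n hn0 h0 h1
    have := Hmn_le h0 h1 S hS2
    rw [hSval] at this
    exact this
  -- arithmetic
  have hM3 : (3:ℝ) ≤ (m:ℝ) := by exact_mod_cast hm
  have hden : (0:ℝ) < 2 * (m:ℝ) - 2 := by linarith
  have hlam : (0:ℝ) ≤ ((m:ℝ) - 2) / (2 * (m:ℝ) - 2) := by
    apply div_nonneg <;> linarith
  have hmu : (0:ℝ) ≤ (m:ℝ) / (2 * (m:ℝ) - 2) := by
    apply div_nonneg <;> linarith
  have hid : 1 + ((n:ℝ) - 1) * hb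
      = ((m:ℝ) - 2) / (2 * (m:ℝ) - 2) * ((n:ℝ) * hb)
        + (m:ℝ) / (2 * (m:ℝ) - 2) * ((2 - 2/(m:ℝ)) + ((n:ℝ) - (2 - 2/(m:ℝ))) * hb) := by
    have hm0 : (m:ℝ) ≠ 0 := by linarith
    have hm1 : (m:ℝ) - 1 ≠ 0 := (by linarith : (0:ℝ) < (m:ℝ) - 1).ne'
    have hm2 : -1 + (m:ℝ) ≠ 0 := (by linarith : (0:ℝ) < -1 + (m:ℝ)).ne'
    field_simp
    ring
  calc Hmn n 2 α ≤ 1 + ((n:ℝ) - 1) * hb := hH2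
    _ = ((m:ℝ) - 2) / (2 * (m:ℝ) - 2) * ((n:ℝ) * hb)
        + (m:ℝ) / (2 * (m:ℝ) - 2) * ((2 - 2/(m:ℝ)) + ((n:ℝ) - (2 - 2/(m:ℝ))) * hb) := hid
    _ ≤ ((m : ℝ) - 2) / (2 * m - 2) * Hmn n 1 α + (m : ℝ) / (2 * m - 2) * Hmn n m α :=
        add_le_add (mul_le_mul_of_nonneg_left hH1 hlam) (mul_le_mul_of_nonneg_left hHm hmu)
end
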